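/- arXiv:2312.00983 — 6 statements merged into one kernel-verified Lean document; each statement's English description precedes it below -/
import Mathlib

section
/- Under the stated setup, assume that n_1, …, n_ℓ are pairwise coprime and that G has no pseudo-reflection. Then for every character 𝒳 of G the semi-invariant module R^𝒳 is nonzero, and the trace of R^𝒳 satisfies tr_{R^G}(R^𝒳) = R^𝒳 · R^{𝒳^{-1}}, the ideal of R^G generated by all products of an element of R^𝒳 with an element of R^{𝒳^{-1}}. -/
open MvPolynomial

set_option synthInstance.maxHeartbeats 1000000
set_option maxHeartbeats 1000000

noncomputable section

/-- The trace ideal of a module `M` over a commutative ring `A`: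
the sum of images of all `A`-linear maps `M → A`. -/
def traceIdeal (A : Type*) [CommRing A] (M : Type*) [AddCommGroup M] [Module A M] :
    Ideal A :=
  ⨆ f : M →ₗ[A] A, LinearMap.range f

variable {K : Type} [Field K] {d : ℕ}

/-- The subgroup of `K`-algebra automorphisms of `K[X_1,…,X_d]` generated
by a family `σ`. -/
def Ggen {ℓ : ℕ} (σ : Fin ℓ → (MvPolynomial (Fin d) K ≃ₐ[K] MvPolynomial (Fin d) K)) :
    Subgroup (MvPolynomial (Fin d) K ≃ₐ[K] MvPolynomial (Fin d) K) :=
  Subgroup.closure (Set.range σ)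

/-- The ring of invariants `R^G`, as a subalgebra of `R = K[X_1,…,X_d]`. -/
def invariants (G : Subgroup (MvPolynomial (Fin d) K ≃ₐ[K] MvPolynomial (Fin d) K)) :
    Subalgebra K (MvPolynomial (Fin d) K) where
  carrier := {a | ∀ g ∈ G, g a = a}
  mul_mem' := fun ha hb g hg => by rw [map_mul, ha g hg, hb g hg]
  one_mem' := fun g hg => map_one _
  add_mem' := fun ha hb g hg => by rw [map_add, ha g hg, hb g hg]
  zero_mem' := fun g hg => map_zero _
  algebraMap_mem' := fun r g hg => AlgEquiv.commutes g r

/-- The semi-invariants `R^𝒳` of weight a character `𝒳 : G → Kˣ`, as an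
`R^G`-submodule of `R`. -/
def semiInvariants (G : Subgroup (MvPolynomial (Fin d) K ≃ₐ[K] MvPolynomial (Fin d) K))
    (χ : G →* Kˣ) : Submodule (invariants G) (MvPolynomial (Fin d) K) where
  carrier := {a | ∀ g : G, (g : MvPolynomial (Fin d) K ≃ₐ[K] MvPolynomial (Fin d) K) a
      = (χ g : K) • a}
  add_mem' := fun ha hb g => by rw [map_add, ha g, hb g, smul_add]
  zero_mem' := fun g => by rw [map_zero, smul_zero]
  smul_mem' := fun s a ha g => by
    have h1 : (s • a : MvPolynomial (Fin d) K) = (s : MvPolynomial (Fin d) K) * a := rfl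
    rw [h1, map_mul, s.2 g g.2, ha g, mul_smul_comm]

/-- The ideal `N₁ · N₂` of `R^G` generated by all products of an element of `N₁`
with an element of `N₂`, for `R^G`-submodules `N₁, N₂` of `R`. -/
def prodIdeal (G : Subgroup (MvPolynomial (Fin d) K ≃ₐ[K] MvPolynomial (Fin d) K))
    (N₁ N₂ : Submodule (invariants G) (MvPolynomial (Fin d) K)) : Ideal (invariants G) :=
  Ideal.span {a : invariants G | ∃ f ∈ N₁, ∃ h ∈ N₂, (a : MvPolynomial (Fin d) K) = f * h}

/-- A (diagonalizable) algebra automorphism of `K[X_1,…,X_d]` is a pseudo-reflection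
if it scales each variable and its eigenspace for the eigenvalue `1` on `K^d`
has dimension `d - 1`, i.e. exactly `d - 1` of the scaling factors equal `1`. -/
def IsPseudoReflection (g : MvPolynomial (Fin d) K ≃ₐ[K] MvPolynomial (Fin d) K) : Prop :=
  ∃ c : Fin d → K, (∀ j, g (X j) = c j • X j) ∧
    Nat.card {j : Fin d // c j = 1} = d - 1

/-! ### Auxiliary lemmas -/

/-- monomial with exponent vector given by a plain function -/
def mon (K : Type) [Field K] {d : ℕ} (a : Fin d → ℕ) : MvPolynomial (Fin d) K :=
  monomial (Finsupp.equivFunOnFinite.symm a) 1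

lemma mon_eq_prod (a : Fin d → ℕ) : mon K a = ∏ j, X j ^ a j := by
  rw [mon, monomial_eq, map_one, one_mul, Finsupp.prod_pow]
  simp

lemma mon_ne_zero (a : Fin d → ℕ) : mon K a ≠ 0 := by
  rw [mon]
  simp [monomial_eq_zero]

lemma algEquiv_ext {e₁ e₂ : MvPolynomial (Fin d) K ≃ₐ[K] MvPolynomial (Fin d) K}
    (h : ∀ j, e₁ (X j) = e₂ (X j)) : e₁ = e₂ := by
  have h2 : (e₁ : MvPolynomial (Fin d) K →ₐ[K] MvPolynomial (Fin d) K) = e₂ :=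
    MvPolynomial.algHom_ext h
  exact AlgEquiv.ext fun x => DFunLike.congr_fun h2 x

lemma apply_mon (g : MvPolynomial (Fin d) K ≃ₐ[K] MvPolynomial (Fin d) K)
    (c : Fin d → K) (h : ∀ j, g (X j) = C (c j) * X j) (a : Fin d → ℕ) :
    g (mon K a) = C (∏ j, c j ^ a j) * mon K a := by
  rw [mon_eq_prod, map_prod]
  rw [show (C (∏ j, c j ^ a j) : MvPolynomial (Fin d) K) = ∏ j, C (c j ^ a j) from map_prod C _ _]
  rw [← Finset.prod_mul_distrib]
  refine Finset.prod_congr rfl fun j _ => ?_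
  rw [map_pow, h j, mul_pow, ← map_pow]

section Group

variable {ℓ : ℕ} {n : Fin ℓ → ℕ} {ξ : Fin ℓ → K} {t : Fin ℓ → Fin d → ℕ}
  {σ : Fin ℓ → (MvPolynomial (Fin d) K ≃ₐ[K] MvPolynomial (Fin d) K)}

lemma sigma_pow_X (hσ : ∀ i j, σ i (X j) = ξ i ^ t i j • X j) (i : Fin ℓ) (m : ℕ) (j : Fin d) :
    ((σ i) ^ m) (X j) = C (ξ i ^ (t i j * m)) * X j := by
  induction m with
  | zero => simp [AlgEquiv.one_apply]
  | succ m ih =>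
    rw [pow_succ, AlgEquiv.mul_apply, hσ i j, smul_eq_C_mul, map_mul, ih]
    have hc : ((σ i) ^ m) (C (ξ i ^ t i j) : MvPolynomial (Fin d) K) = C (ξ i ^ t i j) := by
      have := ((σ i) ^ m).commutes (ξ i ^ t i j)
      simpa [MvPolynomial.algebraMap_eq] using this
    rw [hc, ← mul_assoc, ← map_mul, ← pow_add]
    ring_nf

lemma sigma_pow_n (hξ : ∀ i, IsPrimitiveRoot (ξ i) (n i))
    (hσ : ∀ i j, σ i (X j) = ξ i ^ t i j • X j) (i : Fin ℓ) :
    (σ i) ^ (n i) = 1 := by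
  refine algEquiv_ext fun j => ?_
  rw [sigma_pow_X hσ i (n i) j, AlgEquiv.one_apply, mul_comm (t i j) (n i), pow_mul,
    (hξ i).pow_eq_one, one_pow, map_one, one_mul]

lemma sigma_commute (hσ : ∀ i j, σ i (X j) = ξ i ^ t i j • X j) (i i' : Fin ℓ) :
    Commute (σ i) (σ i') := by
  refine algEquiv_ext fun j => ?_
  rw [AlgEquiv.mul_apply, AlgEquiv.mul_apply, hσ i j, hσ i' j, smul_eq_C_mul, smul_eq_C_mul,
    map_mul, map_mul]
  have h1 : (σ i) (C (ξ i' ^ t i' j) : MvPolynomial (Fin d) K) = C (ξ i' ^ t i' j) := by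
    simpa [MvPolynomial.algebraMap_eq] using (σ i).commutes (ξ i' ^ t i' j)
  have h2 : (σ i') (C (ξ i ^ t i j) : MvPolynomial (Fin d) K) = C (ξ i ^ t i j) := by
    simpa [MvPolynomial.algebraMap_eq] using (σ i').commutes (ξ i ^ t i j)
  rw [h1, h2, hσ i j, hσ i' j, smul_eq_C_mul, smul_eq_C_mul]
  ring

lemma comm_all (hσ : ∀ i j, σ i (X j) = ξ i ^ t i j • X j) :
    ∀ x ∈ Ggen σ, ∀ y ∈ Ggen σ, Commute x y := by
  intro x hx y hy
  induction hx, hy using Subgroup.closure_induction₂ with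
  | mem a b ha hb =>
    obtain ⟨i, rfl⟩ := ha
    obtain ⟨i', rfl⟩ := hb
    exact sigma_commute hσ i i'
  | one_left b hb => exact Commute.one_left _
  | one_right a ha => exact Commute.one_right _
  | mul_left a b c _ _ _ h1 h2 => exact h1.mul_left h2
  | mul_right a b c _ _ _ h1 h2 => exact h1.mul_right h2
  | inv_left a b _ _ h => exact h.inv_left
  | inv_right a b _ _ h => exact h.inv_right

lemma ggen_pow_card_eq_one (hξ : ∀ i, IsPrimitiveRoot (ξ i) (n i))
    (hσ : ∀ i j, σ i (X j) = ξ i ^ t i j • X j) :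
    ∀ g ∈ Ggen σ, g ^ (∏ i, n i) = 1 := by
  intro g hg
  induction hg using Subgroup.closure_induction with
  | mem x hx =>
    obtain ⟨i, rfl⟩ := hx
    have hdvd : n i ∣ ∏ i', n i' := Finset.dvd_prod_of_mem n (Finset.mem_univ i)
    obtain ⟨c, hc⟩ := hdvd
    rw [hc, pow_mul, sigma_pow_n hξ hσ i, one_pow]
  | one => exact one_pow _
  | mul x y hx hy h1 h2 =>
    rw [(comm_all hσ x hx y hy).mul_pow, h1, h2, one_mul]
  | inv x hx h => rw [inv_pow, h, inv_one]

end Group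
lemma pow_congr_of_modEq {k A B : ℕ} {z : K} (h : z ^ k = 1) (hAB : A ≡ B [MOD k]) :
    z ^ A = z ^ B := by
  have key : ∀ m : ℕ, z ^ m = z ^ (m % k) := by
    intro m
    conv_lhs => rw [← Nat.div_add_mod m k]
    rw [pow_add, pow_mul, h, one_pow, one_mul]
  rw [key A, key B, hAB]

section Semi

variable {ℓ : ℕ} {σ : Fin ℓ → (MvPolynomial (Fin d) K ≃ₐ[K] MvPolynomial (Fin d) K)}

lemma mem_semiInv_of_gen (χ : Ggen σ →* Kˣ) (p : MvPolynomial (Fin d) K)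
    (h : ∀ i, σ i p = ((χ ⟨σ i, Subgroup.subset_closure (Set.mem_range_self i)⟩ : Kˣ) : K) • p) :
    p ∈ semiInvariants (Ggen σ) χ := by
  intro g
  obtain ⟨g, hg⟩ := g
  show g p = ((χ ⟨g, hg⟩ : Kˣ) : K) • p
  induction hg using Subgroup.closure_induction with
  | mem x hx =>
    obtain ⟨i, rfl⟩ := hx
    exact h i
  | one =>
    have : (⟨1, Subgroup.one_mem _⟩ : Ggen σ) = 1 := rfl
    rw [this, map_one, AlgEquiv.one_apply, Units.val_one, one_smul]
  | mul x y hx hy h1 h2 =>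
    have hmul : (⟨x * y, Subgroup.mul_mem _ hx hy⟩ : Ggen σ) = ⟨x, hx⟩ * ⟨y, hy⟩ := rfl
    rw [AlgEquiv.mul_apply, h2, smul_eq_C_mul, map_mul, h1, hmul, map_mul]
    have : x (C ((χ ⟨y, hy⟩ : Kˣ) : K) : MvPolynomial (Fin d) K) = C ((χ ⟨y, hy⟩ : Kˣ) : K) := by
      simpa [MvPolynomial.algebraMap_eq] using x.commutes ((χ ⟨y, hy⟩ : Kˣ) : K)
    rw [this, smul_eq_C_mul, smul_eq_C_mul, Units.val_mul, map_mul]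
    ring
  | inv x hx h1 =>
    have hinv : (⟨x⁻¹, Subgroup.inv_mem _ hx⟩ : Ggen σ) = (⟨x, hx⟩ : Ggen σ)⁻¹ := rfl
    have h2 : x⁻¹ (x p) = p := by
      rw [show (x⁻¹ : MvPolynomial (Fin d) K ≃ₐ[K] MvPolynomial (Fin d) K) (x p)
        = (x⁻¹ * x) p from (AlgEquiv.mul_apply _ _ _).symm, inv_mul_cancel, AlgEquiv.one_apply]
    rw [h1, smul_eq_C_mul, map_mul] at h2
    have h3 : x⁻¹ (C ((χ ⟨x, hx⟩ : Kˣ) : K) : MvPolynomial (Fin d) K)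
        = C ((χ ⟨x, hx⟩ : Kˣ) : K) := by
      simpa [MvPolynomial.algebraMap_eq] using
        (x⁻¹ : MvPolynomial (Fin d) K ≃ₐ[K] MvPolynomial (Fin d) K).commutes
          ((χ ⟨x, hx⟩ : Kˣ) : K)
    rw [h3] at h2
    rw [hinv, map_inv]
    have hne : ((χ ⟨x, hx⟩ : Kˣ) : K) ≠ 0 := Units.ne_zero _
    rw [smul_eq_C_mul]
    have : ((((χ ⟨x, hx⟩)⁻¹ : Kˣ) : K)) = ((χ ⟨x, hx⟩ : Kˣ) : K)⁻¹ := by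
      simp
    rw [this]
    have h4 := congrArg (fun w => (C (((χ ⟨x, hx⟩ : Kˣ) : K)⁻¹) : MvPolynomial (Fin d) K) * w) h2
    simp only [← mul_assoc, ← map_mul, inv_mul_cancel₀ hne, map_one, one_mul] at h4
    exact h4

end Semi
section NumberTheory

lemma finset_gcd_bezout {d : ℕ} (f : Fin d → ℕ) (s : Finset (Fin d)) :
    ∃ z : Fin d → ℤ, (∀ k ∉ s, z k = 0) ∧ ∑ k, (f k : ℤ) * z k = ((s.gcd f : ℕ) : ℤ) := by
  classical
  induction s using Finset.induction_on with
  | empty => exact ⟨0, fun k _ => rfl, by simp⟩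
  | insert a s ha ih =>
    obtain ⟨z, hz0, hz⟩ := ih
    set g := s.gcd f with hg
    refine ⟨fun k => if k = a then Nat.gcdA (f a) g else Nat.gcdB (f a) g * z k, ?_, ?_⟩
    · intro k hk
      have hka : k ≠ a := fun h => hk (h ▸ Finset.mem_insert_self a s)
      have hks : k ∉ s := fun h => hk (Finset.mem_insert_of_mem h)
      simp [hka, hz0 k hks]
    · rw [Finset.gcd_insert]
      have hgcd : ((Nat.gcd (f a) g : ℕ) : ℤ)
          = (f a : ℤ) * Nat.gcdA (f a) g + (g : ℤ) * Nat.gcdB (f a) g :=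
        Nat.gcd_eq_gcd_ab (f a) g
      have hsplit : ∑ k, (f k : ℤ) * (if k = a then Nat.gcdA (f a) g else Nat.gcdB (f a) g * z k)
          = (f a : ℤ) * Nat.gcdA (f a) g + Nat.gcdB (f a) g * ∑ k, (f k : ℤ) * z k := by
        rw [Finset.mul_sum]
        rw [show (f a : ℤ) * Nat.gcdA (f a) g
            = ∑ k, if k = a then (f a : ℤ) * Nat.gcdA (f a) g else 0 by
          rw [Finset.sum_ite_eq' Finset.univ a (fun _ => (f a : ℤ) * Nat.gcdA (f a) g)]
          simp]
        rw [← Finset.sum_add_distrib]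
        refine Finset.sum_congr rfl fun k _ => ?_
        by_cases hk : k = a
        · subst hk
          have : z k = 0 := hz0 k ha
          simp [this]
        · simp only [hk, if_false, if_neg hk]
          ring
      rw [hsplit, hz, ← hg]
      rw [show (gcd (f a) g : ℕ) = Nat.gcd (f a) g from rfl, hgcd]
      ring

lemma solve_single {d : ℕ} (f : Fin d → ℕ) (nn : ℕ) (j : Fin d) [NeZero nn]
    (hg : Nat.gcd ((Finset.univ.erase j).gcd f) nn = 1) (m : ℕ) :
    ∃ a : Fin d → ℕ, a j = 0 ∧ ((∑ k, f k * a k : ℕ) : ZMod nn) = (m : ZMod nn) := by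
  classical
  obtain ⟨z, hz0, hz⟩ := finset_gcd_bezout f (Finset.univ.erase j)
  set g := (Finset.univ.erase j).gcd f with hgdef
  set A := Nat.gcdA g nn with hA
  have honeZ : ((g : ZMod nn)) * ((A : ℤ) : ZMod nn) = 1 := by
    have hbez : ((Nat.gcd g nn : ℕ) : ℤ) = g * A + nn * Nat.gcdB g nn := Nat.gcd_eq_gcd_ab g nn
    rw [hg] at hbez
    have hcast := congrArg (fun x : ℤ => (x : ZMod nn)) hbez
    push_cast at hcast
    rw [ZMod.natCast_self] at hcast
    simpa using hcast.symm
  set w : Fin d → ℤ := fun k => z k * A * m with hw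
  refine ⟨fun k => ((w k : ZMod nn)).val, ?_, ?_⟩
  · have : z j = 0 := hz0 j (by simp)
    simp [hw, this]
  · push_cast
    have hcast : ∀ k, ((((w k : ZMod nn)).val : ℕ) : ZMod nn) = ((w k : ℤ) : ZMod nn) := by
      intro k
      rw [ZMod.natCast_val, ZMod.cast_id]
    calc ∑ k, (f k : ZMod nn) * (((w k : ZMod nn)).val : ZMod nn)
        = ∑ k, (f k : ZMod nn) * ((w k : ℤ) : ZMod nn) := by
          refine Finset.sum_congr rfl fun k _ => by rw [hcast k]
      _ = (((∑ k, (f k : ℤ) * w k : ℤ)) : ZMod nn) := by push_cast; ring_nf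
      _ = (m : ZMod nn) := by
          have hsum : (∑ k, (f k : ℤ) * w k) = ((g : ℤ) * A) * m := by
            simp only [hw]
            calc ∑ k, (f k : ℤ) * (z k * A * (m : ℤ))
                = (∑ k, (f k : ℤ) * z k) * (A * m) := by
                  rw [Finset.sum_mul]
                  exact Finset.sum_congr rfl fun k _ => by ring
              _ = ((g : ℤ) * A) * m := by rw [hz]; ring
          rw [hsum]
          push_cast
          rw [honeZ, one_mul]

end NumberTheory
section CRT

lemma solve_crt {d ℓ : ℕ} (t : Fin ℓ → Fin d → ℕ) (n : Fin ℓ → ℕ) (hn : ∀ i, 0 < n i)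
    (hcop : ∀ i i', i ≠ i' → Nat.Coprime (n i) (n i')) (j : Fin d) (m : Fin ℓ → ℕ)
    (hsolve : ∀ i, ∃ a : Fin d → ℕ, a j = 0 ∧
      ((∑ k, t i k * a k : ℕ) : ZMod (n i)) = (m i : ZMod (n i))) :
    ∃ a : Fin d → ℕ, a j = 0 ∧ ∀ i,
      ((∑ k, t i k * a k : ℕ) : ZMod (n i)) = (m i : ZMod (n i)) := by
  classical
  haveI : ∀ i, NeZero (n i) := fun i => ⟨(hn i).ne'⟩
  choose b hbj hb using hsolve
  set M : Fin ℓ → ℕ := fun i => ∏ i' ∈ Finset.univ.erase i, n i' with hM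
  have hcopM : ∀ i, Nat.Coprime (M i) (n i) := by
    intro i
    refine Nat.Coprime.prod_left fun i' hi' => ?_
    exact hcop i' i (Finset.ne_of_mem_erase hi')
  set y : Fin ℓ → ℕ := fun i =>
    ((((ZMod.unitOfCoprime (M i) (hcopM i))⁻¹ : (ZMod (n i))ˣ) : ZMod (n i))).val with hy
  have hMy : ∀ i, ((M i * y i : ℕ) : ZMod (n i)) = 1 := by
    intro i
    push_cast
    rw [hy]
    rw [ZMod.natCast_val, ZMod.cast_id]
    have : ((ZMod.unitOfCoprime (M i) (hcopM i) : (ZMod (n i))ˣ) : ZMod (n i)) = (M i : ZMod (n i)) :=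
      ZMod.coe_unitOfCoprime _ _
    rw [← this, ← Units.val_mul, mul_inv_cancel, Units.val_one]
  refine ⟨fun k => ∑ i, b i k * (M i * y i), ?_, ?_⟩
  · simp only []
    refine Finset.sum_eq_zero fun i _ => by rw [hbj i, zero_mul]
  · intro i
    have hswap : (∑ k, t i k * ∑ i', b i' k * (M i' * y i'))
        = ∑ i', (∑ k, t i k * b i' k) * (M i' * y i') := by
      calc ∑ k, t i k * ∑ i', b i' k * (M i' * y i')
          = ∑ k, ∑ i', t i k * (b i' k * (M i' * y i')) := by
            exact Finset.sum_congr rfl fun k _ => Finset.mul_sum _ _ _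
        _ = ∑ i', ∑ k, t i k * (b i' k * (M i' * y i')) := Finset.sum_comm
        _ = ∑ i', (∑ k, t i k * b i' k) * (M i' * y i') := by
            refine Finset.sum_congr rfl fun i' _ => ?_
            rw [Finset.sum_mul]
            exact Finset.sum_congr rfl fun k _ => by ring
    rw [hswap]
    push_cast
    rw [Finset.sum_eq_single i]
    · have h1 := hb i
      push_cast at h1
      rw [h1]
      have h2 := hMy i
      push_cast at h2
      rw [h2, mul_one]
    · intro i' _ hne
      have hdvd : n i ∣ M i' := Finset.dvd_prod_of_mem n (by simp [Finset.mem_erase, hne.symm])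
      have : ((M i' : ℕ) : ZMod (n i)) = 0 := (ZMod.natCast_eq_zero_iff _ _).mpr hdvd
      push_cast at this
      rw [this, zero_mul, mul_zero]
    · intro h
      exact absurd (Finset.mem_univ i) h

end CRT
section PseudoRefl

variable {ℓ : ℕ} {n : Fin ℓ → ℕ} {ξ : Fin ℓ → K} {t : Fin ℓ → Fin d → ℕ}
  {σ : Fin ℓ → (MvPolynomial (Fin d) K ≃ₐ[K] MvPolynomial (Fin d) K)}

lemma gcd_erase_one (hn : ∀ i, 0 < n i) (hξ : ∀ i, IsPrimitiveRoot (ξ i) (n i))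
    (hgcd : ∀ i, Nat.gcd (Finset.univ.gcd (t i)) (n i) = 1)
    (hσ : ∀ i j, σ i (X j) = ξ i ^ t i j • X j)
    (hpr : ∀ g ∈ Ggen σ, ¬ IsPseudoReflection g) (i : Fin ℓ) (j : Fin d) :
    Nat.gcd ((Finset.univ.erase j).gcd (t i)) (n i) = 1 := by
  classical
  by_contra hne
  set g := Nat.gcd ((Finset.univ.erase j).gcd (t i)) (n i) with hgdef
  have hgdvdn : g ∣ n i := Nat.gcd_dvd_right _ _
  have hgpos : 0 < g := Nat.gcd_pos_of_pos_right _ (hn i)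
  have hgdvdt : ∀ k, k ≠ j → g ∣ t i k := fun k hk =>
    (Nat.gcd_dvd_left _ _).trans (Finset.gcd_dvd (Finset.mem_erase.mpr ⟨hk, Finset.mem_univ k⟩))
  have hgt : ¬ g ∣ t i j := by
    intro hdvd
    apply hne
    have hall : g ∣ Finset.univ.gcd (t i) := by
      refine Finset.dvd_gcd fun k _ => ?_
      by_cases hk : k = j
      · exact hk ▸ hdvd
      · exact hgdvdt k hk
    exact Nat.dvd_one.mp ((hgcd i) ▸ Nat.dvd_gcd hall hgdvdn)
  set e := n i / g with hedef
  have he : n i = g * e := (Nat.mul_div_cancel' hgdvdn).symm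
  have hepos : 0 < e := Nat.div_pos (Nat.le_of_dvd (hn i) hgdvdn) hgpos
  refine hpr ((σ i) ^ e)
    (Subgroup.pow_mem _ (Subgroup.subset_closure (Set.mem_range_self i)) e) ?_
  refine ⟨fun k => ξ i ^ (t i k * e), fun k => ?_, ?_⟩
  · rw [sigma_pow_X hσ i e k, smul_eq_C_mul]
  · have hck : ∀ k, ξ i ^ (t i k * e) = 1 ↔ k ≠ j := by
      intro k
      constructor
      · intro h1 hkj
        subst hkj
        have hdvd := (hξ i).dvd_of_pow_eq_one _ h1
        rw [he] at hdvd
        exact hgt ((Nat.mul_dvd_mul_iff_right hepos).mp hdvd)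
      · intro hk
        obtain ⟨c, hc⟩ := hgdvdt k hk
        rw [(hξ i).pow_eq_one_iff_dvd, he, hc]
        exact ⟨c, by ring⟩
    have : Nat.card {k : Fin d // ξ i ^ (t i k * e) = 1} = Nat.card {k : Fin d // k ≠ j} :=
      Nat.card_congr (Equiv.subtypeEquivRight fun k => hck k)
    have h2 : Nat.card {k : Fin d // k ≠ j} = Nat.card {k : Fin d // ¬ (k = j)} :=
      Nat.card_congr (Equiv.subtypeEquivRight fun k => Iff.rfl)
    rw [this, h2, Nat.card_eq_fintype_card, Fintype.card_subtype_compl,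
      Fintype.card_subtype_eq, Fintype.card_fin]

end PseudoRefl
section ExistsMon

variable {ℓ : ℕ} {n : Fin ℓ → ℕ} {ξ : Fin ℓ → K} {t : Fin ℓ → Fin d → ℕ}
  {σ : Fin ℓ → (MvPolynomial (Fin d) K ≃ₐ[K] MvPolynomial (Fin d) K)}

lemma exists_semiinv_mon (hn : ∀ i, 0 < n i) (hξ : ∀ i, IsPrimitiveRoot (ξ i) (n i))
    (hgcd : ∀ i, Nat.gcd (Finset.univ.gcd (t i)) (n i) = 1)
    (hσ : ∀ i j, σ i (X j) = ξ i ^ t i j • X j)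
    (hcop : ∀ i i', i ≠ i' → Nat.Coprime (n i) (n i'))
    (hpr : ∀ g ∈ Ggen σ, ¬ IsPseudoReflection g)
    (χ : Ggen σ →* Kˣ) (j : Fin d) :
    ∃ a : Fin d → ℕ, a j = 0 ∧ mon K a ∈ semiInvariants (Ggen σ) χ := by
  classical
  haveI : ∀ i, NeZero (n i) := fun i => ⟨(hn i).ne'⟩
  have memσ : ∀ i, σ i ∈ Ggen σ := fun i => Subgroup.subset_closure (Set.mem_range_self i)
  set σ' : Fin ℓ → Ggen σ := fun i => ⟨σ i, memσ i⟩ with hσ'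
  have hpow1 : ∀ i, ((χ (σ' i) : Kˣ) : K) ^ (n i) = 1 := by
    intro i
    have h1 : (σ' i) ^ (n i) = 1 := by
      apply Subtype.ext
      push_cast
      exact sigma_pow_n hξ hσ i
    have h2 : (χ (σ' i)) ^ (n i) = 1 := by rw [← map_pow, h1, map_one]
    calc ((χ (σ' i) : Kˣ) : K) ^ (n i) = (((χ (σ' i)) ^ (n i) : Kˣ) : K) := by
          rw [Units.val_pow_eq_pow_val]
      _ = 1 := by rw [h2, Units.val_one]
  choose m hmlt hm using fun i => (hξ i).eq_pow_of_pow_eq_one (hpow1 i)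
  have hsolve : ∀ i, ∃ a : Fin d → ℕ, a j = 0 ∧
      ((∑ k, t i k * a k : ℕ) : ZMod (n i)) = (m i : ZMod (n i)) :=
    fun i => solve_single (t i) (n i) j (gcd_erase_one hn hξ hgcd hσ hpr i j) (m i)
  obtain ⟨a, haj, hacong⟩ := solve_crt t n hn hcop j m hsolve
  refine ⟨a, haj, ?_⟩
  apply mem_semiInv_of_gen
  intro i
  have happ : σ i (mon K a) = C (∏ k, (ξ i ^ t i k) ^ a k) * mon K a :=
    apply_mon (σ i) (fun k => ξ i ^ t i k)
      (fun k => by rw [hσ i k, smul_eq_C_mul]) a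
  have hprod : (∏ k, (ξ i ^ t i k) ^ a k) = ξ i ^ (∑ k, t i k * a k) := by
    rw [← Finset.prod_pow_eq_pow_sum]
    exact Finset.prod_congr rfl fun k _ => by rw [← pow_mul]
  have hcongr : ξ i ^ (∑ k, t i k * a k) = ξ i ^ (m i) :=
    pow_congr_of_modEq (hξ i).pow_eq_one
      ((ZMod.natCast_eq_natCast_iff _ _ _).mp (hacong i))
  rw [happ, hprod, hcongr, hm i, smul_eq_C_mul]

end ExistsMon
section Dvd

lemma monomial_one_dvd_iff {s : Fin d →₀ ℕ} {x : MvPolynomial (Fin d) K} :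
    monomial s 1 ∣ x ↔ ∀ m ∈ x.support, s ≤ m := by
  rw [MvPolynomial.monomial_one_dvd_iff_modMonomial_eq_zero]
  constructor
  · intro h m hm
    by_contra hle
    have := MvPolynomial.coeff_modMonomial_of_not_le x hle
    rw [h, coeff_zero] at this
    exact (mem_support_iff.mp hm) this.symm
  · intro h
    apply MvPolynomial.ext
    intro m
    rw [coeff_zero]
    by_cases hle : s ≤ m
    · exact MvPolynomial.coeff_modMonomial_of_le x hle
    · rw [MvPolynomial.coeff_modMonomial_of_not_le x hle]
      by_contra hc
      exact hle (h m (mem_support_iff.mpr hc))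

lemma mon_dvd_of_dvd_mul_mon {b : Fin d → ℕ} {F : MvPolynomial (Fin d) K}
    (c : Fin d → Fin d → ℕ) (hc : ∀ j, c j j = 0)
    (hdvd : ∀ j, mon K b ∣ mon K (c j) * F) :
    mon K b ∣ F := by
  have key : ∀ j, ∀ m ∈ (mon K (c j) * F).support, Finsupp.equivFunOnFinite.symm b ≤ m :=
    fun j => monomial_one_dvd_iff.mp (hdvd j)
  refine monomial_one_dvd_iff.mpr ?_
  intro m hm
  rw [Finsupp.le_def]
  intro j
  have hmem : Finsupp.equivFunOnFinite.symm (c j) + m ∈ (mon K (c j) * F).support := by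
    show _ ∈ (monomial (Finsupp.equivFunOnFinite.symm (c j)) (1 : K) * F).support
    rw [mem_support_iff, MvPolynomial.coeff_monomial_mul, one_mul]
    exact mem_support_iff.mp hm
  have h3 := Finsupp.le_def.mp (key j _ hmem) j
  simpa [hc j] using h3

end Dvd
/-- Theorem 3.8: if `n_1, …, n_ℓ` are pairwise coprime and `G` has no pseudo-reflection,
then every semi-invariant module `R^𝒳` is nonzero and
`tr_{R^G}(R^𝒳) = R^𝒳 · R^{𝒳⁻¹}`. -/
theorem statement0 [IsAlgClosed K] {ℓ : ℕ} (hd : 2 ≤ d) (hℓ : 1 ≤ ℓ)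
    (n : Fin ℓ → ℕ) (hn : ∀ i, 0 < n i) (hchar : ∀ i, (n i : K) ≠ 0)
    (ξ : Fin ℓ → K) (hξ : ∀ i, IsPrimitiveRoot (ξ i) (n i))
    (t : Fin ℓ → Fin d → ℕ)
    (hgcd : ∀ i, Nat.gcd (Finset.univ.gcd (t i)) (n i) = 1)
    (σ : Fin ℓ → (MvPolynomial (Fin d) K ≃ₐ[K] MvPolynomial (Fin d) K))
    (hσ : ∀ i j, σ i (X j) = ξ i ^ t i j • X j)
    (hcop : ∀ i i', i ≠ i' → Nat.Coprime (n i) (n i'))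
    (hpr : ∀ g ∈ Ggen σ, ¬ IsPseudoReflection g)
    (χ : Ggen σ →* Kˣ) :
    semiInvariants (Ggen σ) χ ≠ ⊥ ∧
      traceIdeal (invariants (Ggen σ)) (semiInvariants (Ggen σ) χ) =
        prodIdeal (Ggen σ) (semiInvariants (Ggen σ) χ) (semiInvariants (Ggen σ) χ⁻¹) := by
  classical
  have hd0 : 0 < d := lt_of_lt_of_le Nat.zero_lt_two hd
  -- choose a special semi-invariant monomial x₀ = mon b, and for each j one avoiding X j
  obtain ⟨b, -, hb⟩ := exists_semiinv_mon hn hξ hgcd hσ hcop hpr χ ⟨0, hd0⟩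
  choose c hc hcmem using fun j => exists_semiinv_mon hn hξ hgcd hσ hcop hpr χ j
  constructor
  · -- nonvanishing
    intro hbot
    rw [hbot] at hb
    exact mon_ne_zero b ((Submodule.mem_bot _).mp hb)
  -- the trace ideal equality
  set NN := ∏ i, n i with hNN
  have hNN1 : 1 ≤ NN := Finset.prod_pos (fun i _ => hn i)
  have hgN : ∀ g : (Ggen σ), ((χ g : Kˣ) : K) ^ NN = 1 := by
    intro g
    have h1 : (g : MvPolynomial (Fin d) K ≃ₐ[K] MvPolynomial (Fin d) K) ^ NN = 1 :=
      ggen_pow_card_eq_one hξ hσ g g.2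
    have h2 : g ^ NN = (1 : (Ggen σ)) := by
      apply Subtype.ext
      push_cast
      exact h1
    have h3 : (χ g) ^ NN = 1 := by rw [← map_pow, h2, map_one]
    rw [← Units.val_pow_eq_pow_val, h3, Units.val_one]
  -- invariance of z^(NN-1)*y for semi-invariants z, y
  have hinv : ∀ z y : MvPolynomial (Fin d) K, z ∈ (semiInvariants (Ggen σ) χ) → y ∈ (semiInvariants (Ggen σ) χ) →
      z ^ (NN - 1) * y ∈ invariants (Ggen σ) := by
    intro z y hz hy g hg
    rw [map_mul, map_pow, hz ⟨g, hg⟩, hy ⟨g, hg⟩, smul_pow, smul_mul_smul_comm,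
      ← pow_succ, Nat.sub_add_cancel hNN1, hgN ⟨g, hg⟩, one_smul]
  -- the fundamental identity for any ↥(invariants (Ggen σ))-linear functional on (semiInvariants (Ggen σ) χ)
  have key : ∀ (f : (semiInvariants (Ggen σ) χ) →ₗ[↥(invariants (Ggen σ))] ↥(invariants (Ggen σ))) (z y : (semiInvariants (Ggen σ) χ)),
      ((z : MvPolynomial (Fin d) K)) ^ NN * ((f y : ↥(invariants (Ggen σ))) : MvPolynomial (Fin d) K)
        = ((z : MvPolynomial (Fin d) K)) ^ (NN - 1) * (y : MvPolynomial (Fin d) K)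
            * ((f z : ↥(invariants (Ggen σ))) : MvPolynomial (Fin d) K) := by
    intro f z y
    set s1 : ↥(invariants (Ggen σ)) := ⟨(z : MvPolynomial (Fin d) K) ^ (NN - 1) * (z : MvPolynomial (Fin d) K),
      hinv _ _ z.2 z.2⟩ with hs1
    set s2 : ↥(invariants (Ggen σ)) := ⟨(z : MvPolynomial (Fin d) K) ^ (NN - 1) * (y : MvPolynomial (Fin d) K),
      hinv _ _ z.2 y.2⟩ with hs2
    have heq : s1 • y = s2 • z := by
      apply Subtype.ext
      show (s1 : MvPolynomial (Fin d) K) * y = (s2 : MvPolynomial (Fin d) K) * z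
      rw [hs1, hs2]
      ring
    have hf := congrArg f heq
    rw [map_smul, map_smul] at hf
    have hf2 : (s1 : MvPolynomial (Fin d) K) * ((f y : ↥(invariants (Ggen σ))) : MvPolynomial (Fin d) K)
        = (s2 : MvPolynomial (Fin d) K) * ((f z : ↥(invariants (Ggen σ))) : MvPolynomial (Fin d) K) := by
      have : ((s1 • f y : ↥(invariants (Ggen σ))) : MvPolynomial (Fin d) K)
          = ((s2 • f z : ↥(invariants (Ggen σ))) : MvPolynomial (Fin d) K) := by rw [hf]
      simpa [smul_eq_mul] using this
    rw [hs1, hs2] at hf2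
    calc (z : MvPolynomial (Fin d) K) ^ NN * ((f y : ↥(invariants (Ggen σ))) : MvPolynomial (Fin d) K)
        = ((z : MvPolynomial (Fin d) K) ^ (NN - 1) * (z : MvPolynomial (Fin d) K))
            * ((f y : ↥(invariants (Ggen σ))) : MvPolynomial (Fin d) K) := by
          rw [← pow_succ, Nat.sub_add_cancel hNN1]
      _ = ((z : MvPolynomial (Fin d) K) ^ (NN - 1) * (y : MvPolynomial (Fin d) K))
            * ((f z : ↥(invariants (Ggen σ))) : MvPolynomial (Fin d) K) := hf2
      _ = _ := by ring
  apply le_antisymm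
  · -- traceIdeal ≤ prodIdeal
    have htr : traceIdeal ↥(invariants (Ggen σ)) (semiInvariants (Ggen σ) χ) = ⨆ f : (semiInvariants (Ggen σ) χ) →ₗ[↥(invariants (Ggen σ))] ↥(invariants (Ggen σ)), LinearMap.range f := rfl
    rw [htr]
    refine iSup_le fun f => ?_
    set x0 : (semiInvariants (Ggen σ) χ) := ⟨mon K b, hb⟩ with hx0
    set F0 : MvPolynomial (Fin d) K := ((f x0 : ↥(invariants (Ggen σ))) : MvPolynomial (Fin d) K) with hF0
    have hmbne : (mon K b : MvPolynomial (Fin d) K) ≠ 0 := mon_ne_zero b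
    -- divisibility
    have hdvd : ∀ j, mon K b ∣ mon K (c j) * F0 := by
      intro j
      have hk := key f x0 ⟨mon K (c j), hcmem j⟩
      have hpow : (mon K b : MvPolynomial (Fin d) K) ^ NN
          = (mon K b) ^ (NN - 1) * mon K b := by
        rw [← pow_succ, Nat.sub_add_cancel hNN1]
      rw [hx0] at hk
      simp only [] at hk
      rw [hpow] at hk
      have hcan : mon K b * ((f ⟨mon K (c j), hcmem j⟩ : ↥(invariants (Ggen σ))) : MvPolynomial (Fin d) K)
          = mon K (c j) * F0 := by
        apply mul_left_cancel₀ (pow_ne_zero (NN - 1) hmbne)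
        calc (mon K b : MvPolynomial (Fin d) K) ^ (NN - 1)
              * (mon K b * ((f ⟨mon K (c j), hcmem j⟩ : ↥(invariants (Ggen σ))) : MvPolynomial (Fin d) K))
            = (mon K b) ^ (NN - 1) * mon K b
              * ((f ⟨mon K (c j), hcmem j⟩ : ↥(invariants (Ggen σ))) : MvPolynomial (Fin d) K) := by ring
          _ = (mon K b) ^ (NN - 1) * mon K (c j) * F0 := hk
          _ = (mon K b) ^ (NN - 1) * (mon K (c j) * F0) := by ring
      exact ⟨((f ⟨mon K (c j), hcmem j⟩ : ↥(invariants (Ggen σ))) : MvPolynomial (Fin d) K), hcan.symm⟩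
    obtain ⟨q, hq⟩ := mon_dvd_of_dvd_mul_mon c hc hdvd
    -- q is a semi-invariant of weight χ⁻¹
    have hqmem : q ∈ (semiInvariants (Ggen σ) χ⁻¹) := by
      intro g
      have hF0inv : (g : MvPolynomial (Fin d) K ≃ₐ[K] MvPolynomial (Fin d) K) F0 = F0 :=
        (f x0).2 (g : MvPolynomial (Fin d) K ≃ₐ[K] MvPolynomial (Fin d) K) g.2
      rw [hq, map_mul] at hF0inv
      have hgb : (g : MvPolynomial (Fin d) K ≃ₐ[K] MvPolynomial (Fin d) K) (mon K b)
          = ((χ g : Kˣ) : K) • mon K b := hb g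
      rw [hgb, smul_eq_C_mul] at hF0inv
      have hne : ((χ g : Kˣ) : K) ≠ 0 := Units.ne_zero _
      have hcan : C ((χ g : Kˣ) : K)
          * (g : MvPolynomial (Fin d) K ≃ₐ[K] MvPolynomial (Fin d) K) q = q := by
        apply mul_left_cancel₀ hmbne
        calc mon K b * (C ((χ g : Kˣ) : K)
              * (g : MvPolynomial (Fin d) K ≃ₐ[K] MvPolynomial (Fin d) K) q)
            = C ((χ g : Kˣ) : K) * mon K b
              * (g : MvPolynomial (Fin d) K ≃ₐ[K] MvPolynomial (Fin d) K) q := by ring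
          _ = mon K b * q := hF0inv
      have hval : ((χ⁻¹ g : Kˣ) : K) = (((χ g : Kˣ) : K))⁻¹ := by
        simp
      rw [hval, smul_eq_C_mul]
      have h4 := congrArg (fun w => (C ((((χ g : Kˣ) : K))⁻¹) : MvPolynomial (Fin d) K) * w) hcan
      simp only [← mul_assoc, ← map_mul, inv_mul_cancel₀ hne, map_one, one_mul] at h4
      exact h4
    -- f is multiplication by q
    have feq : ∀ v : (semiInvariants (Ggen σ) χ), ((f v : ↥(invariants (Ggen σ))) : MvPolynomial (Fin d) K)
        = q * (v : MvPolynomial (Fin d) K) := by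
      intro v
      have hk := key f x0 v
      rw [hx0] at hk
      simp only [] at hk
      rw [← hF0, hq] at hk
      have h2 : (mon K b : MvPolynomial (Fin d) K) ^ (NN - 1)
            * (mon K b * ((f v : ↥(invariants (Ggen σ))) : MvPolynomial (Fin d) K))
          = (mon K b) ^ (NN - 1) * (mon K b * (q * (v : MvPolynomial (Fin d) K))) := by
        have hpow : (mon K b : MvPolynomial (Fin d) K) ^ NN
            = (mon K b) ^ (NN - 1) * mon K b := by
          rw [← pow_succ, Nat.sub_add_cancel hNN1]
        rw [hpow] at hk
        calc (mon K b : MvPolynomial (Fin d) K) ^ (NN - 1)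
              * (mon K b * ((f v : ↥(invariants (Ggen σ))) : MvPolynomial (Fin d) K))
            = (mon K b) ^ (NN - 1) * mon K b * ((f v : ↥(invariants (Ggen σ))) : MvPolynomial (Fin d) K) := by ring
          _ = (mon K b) ^ (NN - 1) * (v : MvPolynomial (Fin d) K) * (mon K b * q) := hk
          _ = (mon K b) ^ (NN - 1) * (mon K b * (q * (v : MvPolynomial (Fin d) K))) := by ring
      exact mul_left_cancel₀ hmbne
        (mul_left_cancel₀ (pow_ne_zero (NN - 1) hmbne) h2)
    -- conclude
    rintro u ⟨v, rfl⟩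
    apply Ideal.subset_span
    exact ⟨(v : MvPolynomial (Fin d) K), v.2, q, hqmem, by rw [feq v]; ring⟩
  · -- prodIdeal ≤ traceIdeal
    refine Ideal.span_le.mpr ?_
    rintro u ⟨p, hp, h, hh, hu⟩
    have hφmem : ∀ v : (semiInvariants (Ggen σ) χ), h * (v : MvPolynomial (Fin d) K) ∈ invariants (Ggen σ) := by
      intro v g hg
      rw [map_mul, hh ⟨g, hg⟩, v.2 ⟨g, hg⟩, smul_eq_C_mul, smul_eq_C_mul]
      have hval : ((χ⁻¹ ⟨g, hg⟩ : Kˣ) : K) * ((χ ⟨g, hg⟩ : Kˣ) : K) = 1 := by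
        rw [show ((χ⁻¹ ⟨g, hg⟩ : Kˣ) : K) = (((χ ⟨g, hg⟩ : Kˣ) : K))⁻¹ by simp]
        exact inv_mul_cancel₀ (Units.ne_zero _)
      calc C ((χ⁻¹ ⟨g, hg⟩ : Kˣ) : K) * h * (C ((χ ⟨g, hg⟩ : Kˣ) : K)
            * (v : MvPolynomial (Fin d) K))
          = C (((χ⁻¹ ⟨g, hg⟩ : Kˣ) : K) * ((χ ⟨g, hg⟩ : Kˣ) : K))
            * (h * (v : MvPolynomial (Fin d) K)) := by rw [map_mul]; ring
        _ = h * (v : MvPolynomial (Fin d) K) := by rw [hval, map_one, one_mul]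
    set φ : (semiInvariants (Ggen σ) χ) →ₗ[↥(invariants (Ggen σ))] ↥(invariants (Ggen σ)) :=
      { toFun := fun v => ⟨h * (v : MvPolynomial (Fin d) K), hφmem v⟩
        map_add' := fun v w => Subtype.ext (by
          show h * ((v : MvPolynomial (Fin d) K) + w) = h * v + h * w
          ring)
        map_smul' := fun s v => Subtype.ext (by
          show h * ((s : MvPolynomial (Fin d) K) * v) = (s : MvPolynomial (Fin d) K) * (h * v)
          ring) } with hφ
    have : u ∈ LinearMap.range φ := by
      refine ⟨⟨p, hp⟩, Subtype.ext ?_⟩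
      show h * p = (u : MvPolynomial (Fin d) K)
      rw [hu]
      ring
    exact le_iSup (fun f : (semiInvariants (Ggen σ) χ) →ₗ[↥(invariants (Ggen σ))] ↥(invariants (Ggen σ)) => LinearMap.range f) φ this

end
end

section
/- Under the stated setup, for every character 𝒳 of G the inclusion R^G :_{S^{-1}R} R^𝒳 ⊇ R^{𝒳^{-1}} holds. Moreover, if the only elements of R dividing every element of R^𝒳 are the nonzero constants (equivalently, there are finitely many elements of R^𝒳 whose greatest common divisor is 1), then R^G :_{S^{-1}R} R^𝒳 = R^{𝒳^{-1}}. -/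
open MvPolynomial

set_option synthInstance.maxHeartbeats 1000000
set_option maxHeartbeats 1000000

noncomputable section

variable {K : Type} [Field K] {d : ℕ}

/-- Membership in `S⁻¹R ⊆ Q(R)`, where `S = R^G ∖ {0}`: those elements of the fraction
field of `R` that can be written with a denominator which is a nonzero invariant. -/
def memSinvR (G : Subgroup (MvPolynomial (Fin d) K ≃ₐ[K] MvPolynomial (Fin d) K))
    (α : FractionRing (MvPolynomial (Fin d) K)) : Prop :=
  ∃ s : invariants G, s ≠ 0 ∧ ∃ r : MvPolynomial (Fin d) K,
    α * algebraMap (MvPolynomial (Fin d) K) (FractionRing (MvPolynomial (Fin d) K))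
      (s : MvPolynomial (Fin d) K) =
      algebraMap (MvPolynomial (Fin d) K) (FractionRing (MvPolynomial (Fin d) K)) r

/-- The colon `R^G :_{S⁻¹R} R^𝒳 = {α ∈ S⁻¹R : α·R^𝒳 ⊆ R^G}`, as a subset of the
fraction field of `R`. -/
def colonSet (G : Subgroup (MvPolynomial (Fin d) K ≃ₐ[K] MvPolynomial (Fin d) K))
    (χ : G →* Kˣ) : Set (FractionRing (MvPolynomial (Fin d) K)) :=
  {α | memSinvR G α ∧ ∀ f ∈ semiInvariants G χ, ∃ a : invariants G,
    α * algebraMap (MvPolynomial (Fin d) K) (FractionRing (MvPolynomial (Fin d) K)) f =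
      algebraMap (MvPolynomial (Fin d) K) (FractionRing (MvPolynomial (Fin d) K))
        (a : MvPolynomial (Fin d) K)}


section AuxLemmas

variable {K : Type} [Field K] {d : ℕ}

lemma semiInv_mem_colonSet (G : Subgroup (MvPolynomial (Fin d) K ≃ₐ[K] MvPolynomial (Fin d) K))
    (χ : G →* Kˣ) (f : MvPolynomial (Fin d) K) (hf : f ∈ semiInvariants G χ⁻¹) :
    algebraMap (MvPolynomial (Fin d) K) (FractionRing (MvPolynomial (Fin d) K)) f ∈
      colonSet G χ := by
  have hf' : ∀ g : G, (g : MvPolynomial (Fin d) K ≃ₐ[K] MvPolynomial (Fin d) K) f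
      = ((χ⁻¹ g : Kˣ) : K) • f := hf
  constructor
  · exact ⟨1, one_ne_zero, f, by simp⟩
  · intro h hh
    have hh' : ∀ g : G, (g : MvPolynomial (Fin d) K ≃ₐ[K] MvPolynomial (Fin d) K) h
        = ((χ g : Kˣ) : K) • h := hh
    refine ⟨⟨f * h, ?_⟩, (map_mul _ _ _).symm⟩
    intro g hg
    rw [map_mul, hf' ⟨g, hg⟩, hh' ⟨g, hg⟩, smul_mul_smul_comm]
    have hu : ((χ⁻¹ ⟨g, hg⟩ : Kˣ) : K) * ((χ ⟨g, hg⟩ : Kˣ) : K) = 1 := by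
      rw [MonoidHom.inv_apply, Units.val_inv_eq_inv_val,
        inv_mul_cancel₀ (Units.ne_zero _)]
    rw [hu, one_smul]

end AuxLemmas

/-- Proposition 3.3: `R^G :_{S⁻¹R} R^𝒳 ⊇ R^{𝒳⁻¹}` always holds; and if the only
elements of `R` dividing every element of `R^𝒳` are the nonzero constants
(i.e. `gcd(R^𝒳) = 1`), then `R^G :_{S⁻¹R} R^𝒳 = R^{𝒳⁻¹}`. -/
theorem statement3 [IsAlgClosed K] {ℓ : ℕ} (hd : 2 ≤ d) (hℓ : 1 ≤ ℓ)
    (n : Fin ℓ → ℕ) (hn : ∀ i, 0 < n i) (hchar : ∀ i, (n i : K) ≠ 0)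
    (ξ : Fin ℓ → K) (hξ : ∀ i, IsPrimitiveRoot (ξ i) (n i))
    (t : Fin ℓ → Fin d → ℕ)
    (hgcd : ∀ i, Nat.gcd (Finset.univ.gcd (t i)) (n i) = 1)
    (σ : Fin ℓ → (MvPolynomial (Fin d) K ≃ₐ[K] MvPolynomial (Fin d) K))
    (hσ : ∀ i j, σ i (X j) = ξ i ^ t i j • X j)
    (χ : Ggen σ →* Kˣ) :
    (∀ f ∈ semiInvariants (Ggen σ) χ⁻¹,
      algebraMap (MvPolynomial (Fin d) K) (FractionRing (MvPolynomial (Fin d) K)) f ∈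
        colonSet (Ggen σ) χ) ∧
    ((∀ b : MvPolynomial (Fin d) K,
        (∀ f ∈ semiInvariants (Ggen σ) χ, b ∣ f) → ∃ c : K, c ≠ 0 ∧ b = C c) →
      colonSet (Ggen σ) χ =
        (algebraMap (MvPolynomial (Fin d) K) (FractionRing (MvPolynomial (Fin d) K))) ''
          (semiInvariants (Ggen σ) χ⁻¹ : Set (MvPolynomial (Fin d) K))) := by
  classical
  set R := MvPolynomial (Fin d) K
  set F := FractionRing (MvPolynomial (Fin d) K)
  set ι := algebraMap (MvPolynomial (Fin d) K) (FractionRing (MvPolynomial (Fin d) K)) with hι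
  have inj : Function.Injective ι := IsFractionRing.injective _ _
  refine ⟨fun f hf => semiInv_mem_colonSet _ _ f hf, ?_⟩
  intro H
  apply Set.Subset.antisymm
  · intro α hα
    obtain ⟨⟨s, hs0, r, hsr⟩, hcol⟩ := hα
    -- a nonzero semi-invariant of weight χ exists
    have hX : ∃ f₀ ∈ semiInvariants (Ggen σ) χ, f₀ ≠ 0 := by
      by_contra hc
      push_neg at hc
      obtain ⟨c, hc0, hXc⟩ := H (X (⟨0, by omega⟩ : Fin d))
        (fun f hf => by rw [hc f hf]; exact dvd_zero _)
      have hcf := congrArg (MvPolynomial.coeff (Finsupp.single (⟨0, by omega⟩ : Fin d) 1)) hXc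
      rw [MvPolynomial.coeff_X_same, MvPolynomial.coeff_C,
        if_neg (fun h => one_ne_zero (Finsupp.single_eq_zero.mp h.symm))] at hcf
      exact one_ne_zero hcf
    obtain ⟨f₀, hf₀S, hf₀⟩ := hX
    have hf₀S' : ∀ g : (Ggen σ), (g : MvPolynomial (Fin d) K ≃ₐ[K] MvPolynomial (Fin d) K) f₀
        = ((χ g : Kˣ) : K) • f₀ := hf₀S
    letI : GCDMonoid R := UniqueFactorizationMonoid.toGCDMonoid R
    set sR : R := (s : R) with hsRdef
    have hsR0 : sR ≠ 0 := fun h => hs0 (Subtype.ext h)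
    have hdvd : ∀ f ∈ semiInvariants (Ggen σ) χ, sR ∣ r * f := by
      intro f hf
      obtain ⟨a, ha⟩ := hcol f hf
      refine ⟨a, inj ?_⟩
      rw [map_mul, map_mul, ← ha, ← hsr]; ring
    obtain ⟨s', hs'⟩ := gcd_dvd_left sR r
    obtain ⟨r', hr'⟩ := gcd_dvd_right sR r
    set g := gcd sR r with hg
    clear_value g
    have hg0 : g ≠ 0 := fun h => hsR0 (by rw [hs', h, zero_mul])
    have hrel : IsRelPrime s' r' := by
      intro e hes her
      have h1 : g * e ∣ gcd sR r := dvd_gcd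
        (by rw [hs']; exact mul_dvd_mul_left _ hes)
        (by rw [hr']; exact mul_dvd_mul_left _ her)
      rw [← hg] at h1
      obtain ⟨w, hw⟩ := h1
      have h2 : (1 : R) = e * w := by
        apply mul_left_cancel₀ hg0
        rw [mul_one, ← mul_assoc, ← hw]
      exact IsUnit.of_mul_eq_one _ h2.symm
    have hs'dvd : ∀ f ∈ semiInvariants (Ggen σ) χ, s' ∣ f := by
      intro f hf
      have h2 : g * s' ∣ g * (r' * f) := by
        rw [← hs', ← mul_assoc, ← hr']; exact hdvd f hf
      exact hrel.dvd_of_dvd_mul_left ((mul_dvd_mul_iff_left hg0).mp h2)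
    obtain ⟨c, hc0, hs'C⟩ := H s' hs'dvd
    have hg0' : ι g ≠ 0 := fun h => hg0 (inj (by rw [h, map_zero]))
    have hCc0 : (C c : R) ≠ 0 := fun h => hc0 (by simpa using h)
    have hCc0' : ι (C c) ≠ 0 := fun h => hCc0 (inj (by rw [h, map_zero]))
    set q : R := C c⁻¹ * r' with hqdef
    have e1 : ι g * (α * ι (C c)) = ι g * ι r' := by
      have h : α * ι sR = ι r := hsr
      rw [hs', hs'C, hr', map_mul, map_mul] at h
      rw [← h]; ring
    have e2 : α * ι (C c) = ι r' := mul_left_cancel₀ hg0' e1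
    have hq1 : q * C c = r' := by
      rw [hqdef, mul_comm (C c⁻¹ : R) r', mul_assoc, ← C_mul, inv_mul_cancel₀ hc0, C_1, mul_one]
    have hαq : α = ι q := by
      apply mul_right_cancel₀ hCc0'
      rw [e2, ← map_mul, hq1]
    have hqf : ∀ e : MvPolynomial (Fin d) K ≃ₐ[K] MvPolynomial (Fin d) K, e ∈ Ggen σ →
        e (q * f₀) = q * f₀ := by
      obtain ⟨a, ha⟩ := hcol f₀ hf₀S
      have hqa : q * f₀ = (a : R) := inj (by rw [map_mul, ← hαq, ha])
      rw [hqa]; exact a.2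
    have hqmem : q ∈ semiInvariants (Ggen σ) χ⁻¹ := by
      intro g'
      have h1 : (g' : MvPolynomial (Fin d) K ≃ₐ[K] MvPolynomial (Fin d) K) (q * f₀)
          = q * f₀ := hqf g' g'.2
      rw [map_mul, hf₀S' g'] at h1
      have hχ0 : ((χ g' : Kˣ) : K) ≠ 0 := Units.ne_zero _
      have h3 : (((χ g' : Kˣ) : K) •
          ((g' : MvPolynomial (Fin d) K ≃ₐ[K] MvPolynomial (Fin d) K) q)) * f₀ = q * f₀ := by
        rw [smul_mul_assoc, ← mul_smul_comm]; exact h1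
      have h4 := mul_right_cancel₀ hf₀ h3
      have h5 : (g' : MvPolynomial (Fin d) K ≃ₐ[K] MvPolynomial (Fin d) K) q
          = ((χ g' : Kˣ) : K)⁻¹ • q := by
        conv_rhs => rw [← h4]
        rw [smul_smul, inv_mul_cancel₀ hχ0, one_smul]
      rw [h5, MonoidHom.inv_apply, Units.val_inv_eq_inv_val]
    exact ⟨q, hqmem, hαq.symm⟩
  · rintro α ⟨f, hf, rfl⟩
    exact semiInv_mem_colonSet _ _ f hf


end
end

section
/- Under the stated setup, assume that n_1, …, n_ℓ are pairwise coprime and that G has no pseudo-reflection. Then for every j with 1 ≤ j ≤ d there exist positive integers c_k for k ∈ {1,…,d} ∖ {j} such that the monomial ∏_{k ≠ j} X_k^{c_k} belongs to R^{(1,1,…,1)}, the semi-invariants of the character 𝒳 with 𝒳(σ_i) = ξ_i for all i. -/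
open MvPolynomial

set_option synthInstance.maxHeartbeats 1000000
set_option maxHeartbeats 1000000

noncomputable section

variable {K : Type} [Field K] {d : ℕ}

lemma aux_pow_X (τ : MvPolynomial (Fin d) K ≃ₐ[K] MvPolynomial (Fin d) K)
    (a : Fin d → K) (hτ : ∀ j, τ (X j) = a j • X j) (m : ℕ) (k : Fin d) :
    (τ ^ m) (X k) = a k ^ m • X k := by
  induction m with
  | zero => simp
  | succ m ih =>
    rw [pow_succ', AlgEquiv.mul_apply, ih, map_smul, hτ, smul_smul, ← pow_succ]

lemma aux_map_prod (τ : MvPolynomial (Fin d) K ≃ₐ[K] MvPolynomial (Fin d) K)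
    (a : Fin d → K) (hτ : ∀ j, τ (X j) = a j • X j)
    (s : Finset (Fin d)) (c : Fin d → ℕ) :
    τ (∏ k ∈ s, X k ^ c k) =
      (∏ k ∈ s, a k ^ c k) • ∏ k ∈ s, (X k : MvPolynomial (Fin d) K) ^ c k := by
  rw [map_prod]
  simp_rw [map_pow, hτ, smul_pow, smul_eq_C_mul, Finset.prod_mul_distrib, ← map_prod]

lemma aux_bezout {α : Type} [DecidableEq α] (s : Finset α) (f : α → ℕ) :
    ∃ w : α → ℤ, ((s.gcd f : ℕ) : ℤ) = ∑ k ∈ s, (f k : ℤ) * w k := by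
  induction s using Finset.induction with
  | empty => exact ⟨0, by simp⟩
  | @insert b s' hb ih =>
    obtain ⟨w, hw⟩ := ih
    set A := Int.gcdA (f b : ℤ) ((s'.gcd f : ℕ) : ℤ) with hA
    set B := Int.gcdB (f b : ℤ) ((s'.gcd f : ℕ) : ℤ) with hB
    have hbez : ((Nat.gcd (f b) (s'.gcd f) : ℕ) : ℤ)
        = (f b : ℤ) * A + ((s'.gcd f : ℕ) : ℤ) * B := by
      rw [hA, hB, ← Int.gcd_natCast_natCast]; exact Int.gcd_eq_gcd_ab _ _
    refine ⟨fun k => if k = b then A else w k * B, ?_⟩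
    have h1 : ((insert b s').gcd f : ℕ) = Nat.gcd (f b) (s'.gcd f) := by
      rw [Finset.gcd_insert]; rfl
    rw [h1, Finset.sum_insert hb, hbez, hw, Finset.sum_mul]
    simp only [if_pos rfl]
    congr 1
    refine Finset.sum_congr rfl fun k hk => ?_
    rw [if_neg (by rintro rfl; exact hb hk)]
    ring

lemma aux_sum_modEq {α : Type} (s : Finset α) (f g : α → ℤ) {n : ℤ}
    (h : ∀ k ∈ s, f k ≡ g k [ZMOD n]) : (∑ k ∈ s, f k) ≡ ∑ k ∈ s, g k [ZMOD n] := by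
  classical
  induction s using Finset.induction with
  | empty => rfl
  | @insert b s' hb ih =>
    rw [Finset.sum_insert hb, Finset.sum_insert hb]
    exact (h b (Finset.mem_insert_self _ _)).add
      (ih fun k hk => h k (Finset.mem_insert_of_mem hk))

lemma aux_pow_modEq {ξ : K} {n S : ℕ} (h : IsPrimitiveRoot ξ n) (hS : S ≡ 1 [MOD n]) :
    ξ ^ S = ξ := by
  rcases Nat.eq_zero_or_pos S with h0 | hpos
  · subst h0
    have hd : n ∣ 1 := by simpa using (Nat.modEq_iff_dvd' (by norm_num)).mp hS
    have hn1 : n = 1 := Nat.dvd_one.mp hd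
    have h1 := h.pow_eq_one
    rw [hn1, pow_one] at h1
    simp [h1]
  · obtain ⟨q, hq⟩ := (Nat.modEq_iff_dvd' hpos).mp hS.symm
    have hSe : S = 1 + n * q := by omega
    rw [hSe, pow_add, pow_one, pow_mul, h.pow_eq_one, one_pow, mul_one]

lemma aux_card {j : Fin d} (c : Fin d → K) (hc : ∀ k, c k = 1 ↔ k ≠ j) :
    Nat.card {k : Fin d // c k = 1} = d - 1 := by
  classical
  have e : {k : Fin d // c k = 1} ≃ {k : Fin d // ¬ (k = j)} :=
    Equiv.subtypeEquivRight (fun k => (hc k))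
  rw [Nat.card_congr e, Nat.card_eq_fintype_card, Fintype.card_subtype_compl,
    Fintype.card_subtype_eq, Fintype.card_fin]

/-- Claim in the proof of Theorem 3.8: if `n_1, …, n_ℓ` are pairwise coprime and `G`
has no pseudo-reflection, then for each `j` there are positive integers `c_k`
(`k ≠ j`) such that `∏_{k ≠ j} X_k^{c_k}` lies in `R^{(1,1,…,1)}`, the semi-invariants
of the character sending `σ_i` to `ξ_i`. -/
theorem statement7 [IsAlgClosed K] {ℓ : ℕ} (hd : 2 ≤ d) (hℓ : 1 ≤ ℓ)
    (n : Fin ℓ → ℕ) (hn : ∀ i, 0 < n i) (hchar : ∀ i, (n i : K) ≠ 0)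
    (ξ : Fin ℓ → K) (hξ : ∀ i, IsPrimitiveRoot (ξ i) (n i))
    (t : Fin ℓ → Fin d → ℕ)
    (hgcd : ∀ i, Nat.gcd (Finset.univ.gcd (t i)) (n i) = 1)
    (σ : Fin ℓ → (MvPolynomial (Fin d) K ≃ₐ[K] MvPolynomial (Fin d) K))
    (hσ : ∀ i j, σ i (X j) = ξ i ^ t i j • X j)
    (hcop : ∀ i i', i ≠ i' → Nat.Coprime (n i) (n i'))
    (hpr : ∀ g ∈ Ggen σ, ¬ IsPseudoReflection g) :
    ∀ j : Fin d, ∃ c : Fin d → ℕ, (∀ k, k ≠ j → 0 < c k) ∧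
      ∀ i, σ i (∏ k ∈ Finset.univ.erase j, X k ^ c k) =
        ξ i • ∏ k ∈ Finset.univ.erase j, (X k : MvPolynomial (Fin d) K) ^ c k := by
  classical
  intro j
  set ej : Finset (Fin d) := Finset.univ.erase j with hej
  -- Step 1: the gcd of the t i k, k ≠ j, is coprime to n i
  have claim1 : ∀ i, Nat.gcd (ej.gcd (t i)) (n i) = 1 := by
    intro i
    by_contra hne
    obtain ⟨p, hp, hpd⟩ := Nat.exists_prime_and_dvd hne
    have hpn : p ∣ n i := hpd.trans (Nat.gcd_dvd_right _ _)
    have hpG : p ∣ ej.gcd (t i) := hpd.trans (Nat.gcd_dvd_left _ _)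
    have hpt : ∀ k, k ≠ j → p ∣ t i k := fun k hk =>
      hpG.trans (Finset.gcd_dvd (by simp [hej, Finset.mem_erase, hk]))
    have hptj : ¬ p ∣ t i j := by
      intro hdvd
      have hall : p ∣ Finset.univ.gcd (t i) := Finset.dvd_gcd (fun k _ => by
        by_cases hkj : k = j
        · exact hkj ▸ hdvd
        · exact hpt k hkj)
      have : p ∣ 1 := (hgcd i) ▸ Nat.dvd_gcd hall hpn
      exact hp.one_lt.ne' (Nat.dvd_one.mp this)
    set m := n i / p with hm
    have hnm : n i = p * m := (Nat.mul_div_cancel' hpn).symm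
    have hm0 : 0 < m := Nat.div_pos (Nat.le_of_dvd (hn i) hpn) hp.pos
    have hmem : (σ i) ^ m ∈ Ggen σ :=
      Subgroup.pow_mem _ (Subgroup.subset_closure (Set.mem_range_self i)) m
    apply hpr _ hmem
    refine ⟨fun k => (ξ i ^ t i k) ^ m, fun k => aux_pow_X (σ i) _ (hσ i) m k, ?_⟩
    refine aux_card (j := j) _ (fun k => ?_)
    rw [← pow_mul, (hξ i).pow_eq_one_iff_dvd]
    constructor
    · intro hdvd
      rintro rfl
      rw [hnm, Nat.mul_dvd_mul_iff_right hm0] at hdvd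
      exact hptj hdvd
    · intro hk
      obtain ⟨q, hq⟩ := hpt k hk
      exact ⟨q, by rw [hnm, hq]; ring⟩
  -- Step 2: per-i integer solution mod n i
  have claim2 : ∀ i, ∃ a : Fin d → ℤ,
      (∑ k ∈ ej, (t i k : ℤ) * a k) ≡ 1 [ZMOD (n i : ℤ)] := by
    intro i
    obtain ⟨w, hw⟩ := aux_bezout ej (t i)
    set G : ℕ := ej.gcd (t i) with hG
    set A := Int.gcdA (G : ℤ) (n i : ℤ) with hA
    set B := Int.gcdB (G : ℤ) (n i : ℤ) with hB
    have hbez : (1 : ℤ) = (G : ℤ) * A + (n i : ℤ) * B := by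
      have := Int.gcd_eq_gcd_ab (G : ℤ) (n i : ℤ)
      rwa [Int.gcd_natCast_natCast, claim1 i, Nat.cast_one] at this
    refine ⟨fun k => w k * A, ?_⟩
    have hsum : (∑ k ∈ ej, (t i k : ℤ) * (w k * A)) = (G : ℤ) * A := by
      rw [hG, hw, Finset.sum_mul]
      exact Finset.sum_congr rfl fun k _ => by ring
    rw [hsum]
    have : (n i : ℤ) ∣ 1 - (G : ℤ) * A := ⟨B, by linarith⟩
    exact (Int.modEq_iff_dvd.mpr this).symm.symm
  choose a ha using claim2
  -- Step 3: CRT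
  set N : ℕ := ∏ i, n i with hN
  have hNpos : 0 < N := Finset.prod_pos (fun i _ => hn i)
  set M : Fin ℓ → ℕ := fun i => ∏ i' ∈ Finset.univ.erase i, n i' with hM
  have hMN : ∀ i, n i * M i = N := fun i =>
    Finset.mul_prod_erase _ _ (Finset.mem_univ i)
  have hdvdM : ∀ i i', i' ≠ i → (n i : ℤ) ∣ (M i' : ℤ) := by
    intro i i' hne
    exact_mod_cast Int.natCast_dvd_natCast.mpr
      (Finset.dvd_prod_of_mem _ (Finset.mem_erase.mpr ⟨Ne.symm hne, Finset.mem_univ i⟩))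
  have hdvdN : ∀ i, (n i : ℤ) ∣ (N : ℤ) := fun i =>
    Int.natCast_dvd_natCast.mpr ⟨M i, (hMN i).symm⟩
  set u : Fin ℓ → ℤ := fun i => Int.gcdA (M i : ℤ) (n i : ℤ) with hu'
  have hu : ∀ i, (M i : ℤ) * u i ≡ 1 [ZMOD (n i : ℤ)] := by
    intro i
    have hcopMi : Nat.gcd (M i) (n i) = 1 := by
      have : Nat.Coprime (M i) (n i) :=
        Nat.Coprime.prod_left (fun i' hi' => hcop i' i (Finset.ne_of_mem_erase hi'))
      exact this
    have hbez : (1 : ℤ) = (M i : ℤ) * u i + (n i : ℤ) * Int.gcdB (M i : ℤ) (n i : ℤ) := by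
      have := Int.gcd_eq_gcd_ab (M i : ℤ) (n i : ℤ)
      rwa [Int.gcd_natCast_natCast, hcopMi, Nat.cast_one] at this
    have : (n i : ℤ) ∣ 1 - (M i : ℤ) * u i := ⟨Int.gcdB (M i : ℤ) (n i : ℤ), by linarith⟩
    exact (Int.modEq_iff_dvd.mpr this).symm.symm
  set E : Fin d → ℤ := fun k => ∑ i, a i k * ((M i : ℤ) * u i) with hE'
  have hE : ∀ i, (∑ k ∈ ej, (t i k : ℤ) * E k) ≡ 1 [ZMOD (n i : ℤ)] := by
    intro i
    have hswap : (∑ k ∈ ej, (t i k : ℤ) * E k)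
        = ∑ i' : Fin ℓ, ((M i' : ℤ) * u i') * ∑ k ∈ ej, (t i k : ℤ) * a i' k := by
      simp_rw [hE', Finset.mul_sum]
      rw [Finset.sum_comm]
      exact Finset.sum_congr rfl fun i' _ =>
        Finset.sum_congr rfl fun k _ => by ring
    rw [hswap]
    have hterm : ∀ i' ∈ (Finset.univ : Finset (Fin ℓ)),
        ((M i' : ℤ) * u i') * ∑ k ∈ ej, (t i k : ℤ) * a i' k
          ≡ (if i' = i then 1 else 0) [ZMOD (n i : ℤ)] := by
      intro i' _
      by_cases hii : i' = i
      · subst hii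
        rw [if_pos rfl]
        simpa using (hu i').mul (ha i')
      · rw [if_neg hii]
        exact (Int.modEq_zero_iff_dvd).mpr (((hdvdM i i' hii).mul_right _).mul_right _)
    have := aux_sum_modEq Finset.univ _ _ hterm
    simpa using this
  -- Step 4: positive natural solution
  set c : Fin d → ℕ := fun k => (E k % (N : ℤ)).toNat + N with hc'
  have hcpos : ∀ k, 0 < c k := fun k => Nat.lt_of_lt_of_le hNpos (Nat.le_add_left N _)
  have hcE : ∀ k, (c k : ℤ) ≡ E k [ZMOD (N : ℤ)] := by
    intro k
    have hNne : (N : ℤ) ≠ 0 := by exact_mod_cast hNpos.ne'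
    have hcast : ((c k : ℕ) : ℤ) = E k % (N : ℤ) + (N : ℤ) := by
      rw [hc']
      push_cast [Int.toNat_of_nonneg (Int.emod_nonneg _ hNne)]
      ring
    rw [hcast]
    have h1 : E k % (N : ℤ) ≡ E k [ZMOD (N : ℤ)] := Int.emod_emod_of_dvd _ dvd_rfl
    have h2 : (N : ℤ) ≡ 0 [ZMOD (N : ℤ)] := (Int.modEq_zero_iff_dvd).mpr dvd_rfl
    simpa using h1.add h2
  refine ⟨c, fun k _ => hcpos k, fun i => ?_⟩
  rw [aux_map_prod (σ i) _ (hσ i)]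
  have hmod : (∑ k ∈ ej, t i k * c k) ≡ 1 [MOD n i] := by
    rw [← Int.natCast_modEq_iff]
    push_cast
    have step : (∑ k ∈ ej, (t i k : ℤ) * (c k : ℤ)) ≡ ∑ k ∈ ej, (t i k : ℤ) * E k
        [ZMOD (n i : ℤ)] :=
      aux_sum_modEq ej _ _ (fun k _ =>
        ((hcE k).of_dvd (hdvdN i)).mul_left _)
    exact step.trans (hE i)
  have hscal : (∏ k ∈ ej, (ξ i ^ t i k) ^ c k) = ξ i := by
    simp_rw [← pow_mul]
    rw [Finset.prod_pow_eq_pow_sum]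
    exact aux_pow_modEq (hξ i) hmod
  rw [hscal]
end
end

section
/- Under the stated setup, let n = n_1 n_2 ⋯ n_ℓ and let 𝒳 be any character of G. Consider the conditions: (1) for every graded prime ideal p of R^G with p ≠ m_G, the localization (R^𝒳)_p is a free (R^G)_p-module; (2) the ideal (X_1^n, …, X_d^n) of R^G is contained in tr_{R^G}(R^𝒳); (3) for every j with 1 ≤ j ≤ d there exists an integer u_j with 0 < u_j ≤ n such that X_j^{u_j} ∈ R^𝒳. Then (3) implies (2), and (2) implies (1). -/
open MvPolynomial

set_option synthInstance.maxHeartbeats 1000000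
set_option maxHeartbeats 1000000

noncomputable section

variable {K : Type} [Field K] {d : ℕ}

/-- An ideal of `R^G` is graded if, together with each element, it contains all of its
homogeneous components (taken in `R = K[X_1,…,X_d]` with the standard grading). -/
def IsGradedIdeal (G : Subgroup (MvPolynomial (Fin d) K ≃ₐ[K] MvPolynomial (Fin d) K))
    (p : Ideal (invariants G)) : Prop :=
  ∀ a : invariants G, a ∈ p → ∀ k : ℕ, ∀ b : invariants G,
    (b : MvPolynomial (Fin d) K) = homogeneousComponent k (a : MvPolynomial (Fin d) K) →
      b ∈ p

/-- The graded maximal ideal `m_G` of `R^G`: the invariants with zero constant term. -/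
def mG (G : Subgroup (MvPolynomial (Fin d) K ≃ₐ[K] MvPolynomial (Fin d) K)) :
    Ideal (invariants G) :=
  RingHom.ker ((constantCoeff : MvPolynomial (Fin d) K →+* K).comp
    (Subalgebra.val (invariants G)).toRingHom)


section auxlemmas
variable {ℓ N : ℕ} {n : Fin ℓ → ℕ} {ξ : Fin ℓ → K} {t : Fin ℓ → Fin d → ℕ}
  {σ : Fin ℓ → (MvPolynomial (Fin d) K ≃ₐ[K] MvPolynomial (Fin d) K)}

lemma C_mem_invariants (G : Subgroup (MvPolynomial (Fin d) K ≃ₐ[K] MvPolynomial (Fin d) K))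
    (k0 : K) : (C k0 : MvPolynomial (Fin d) K) ∈ invariants G := by
  rw [← MvPolynomial.algebraMap_eq]; exact Subalgebra.algebraMap_mem _ k0

variable {ℓ N : ℕ} {n : Fin ℓ → ℕ} {ξ : Fin ℓ → K} {t : Fin ℓ → Fin d → ℕ}
  {σ : Fin ℓ → (MvPolynomial (Fin d) K ≃ₐ[K] MvPolynomial (Fin d) K)}

/-- every element of the group acts diagonally on variables, with N-th root of unity scalars -/
lemma diagX (hN0 : 0 < N) (hξ : ∀ i, ξ i ^ n i = 1) (hσ : ∀ i j, σ i (X j) = ξ i ^ t i j • X j)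
    (hdvd : ∀ i, n i ∣ N) {g} (hg : g ∈ Ggen σ) :
    ∀ j, ∃ c : K, c ^ N = 1 ∧ g (X j : MvPolynomial (Fin d) K) = C c * X j := by
  induction hg using Subgroup.closure_induction with
  | mem x hx =>
    obtain ⟨i, rfl⟩ := hx
    intro j
    obtain ⟨k, hk⟩ := hdvd i
    refine ⟨ξ i ^ t i j, ?_, by rw [hσ i j, smul_eq_C_mul]⟩
    rw [← pow_mul, mul_comm (t i j), pow_mul, hk, pow_mul, hξ i, one_pow, one_pow]
  | one => exact fun j => ⟨1, one_pow N, by simp⟩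
  | mul x y hx hy ihx ihy =>
    intro j
    obtain ⟨cy, hcy1, hcy2⟩ := ihy j
    obtain ⟨cx, hcx1, hcx2⟩ := ihx j
    refine ⟨cx * cy, by rw [mul_pow, hcx1, hcy1, one_mul], ?_⟩
    have : (x * y) (X j : MvPolynomial (Fin d) K) = x (y (X j)) := rfl
    have hC : x (C cy) = C cy := by
      rw [← MvPolynomial.algebraMap_eq]; exact x.commutes cy
    rw [this, hcy2, map_mul, hC, hcx2, map_mul]; ring
  | inv x hx ihx =>
    intro j
    obtain ⟨c, hc1, hc2⟩ := ihx j
    have hc0 : c ≠ 0 := by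
      rintro rfl; rw [zero_pow hN0.ne'] at hc1; exact zero_ne_one hc1
    refine ⟨c⁻¹, by rw [inv_pow, hc1, inv_one], ?_⟩
    apply x.injective
    have hxi : x ((x⁻¹ : _) (X j : MvPolynomial (Fin d) K)) = X j :=
      x.apply_symm_apply _
    have hC : x (C c⁻¹) = C c⁻¹ := by
      rw [← MvPolynomial.algebraMap_eq]; exact x.commutes _
    rw [hxi, map_mul, hC, hc2, ← mul_assoc, ← C_mul, inv_mul_cancel₀ hc0, C_1, one_mul]

def cval (g : MvPolynomial (Fin d) K ≃ₐ[K] MvPolynomial (Fin d) K) (α : Fin d →₀ ℕ) : K :=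
  coeff α (g (monomial α 1))

lemma cval_spec (hN0 : 0 < N) (hξ : ∀ i, ξ i ^ n i = 1)
    (hσ : ∀ i j, σ i (X j) = ξ i ^ t i j • X j) (hdvd : ∀ i, n i ∣ N)
    {g} (hg : g ∈ Ggen σ) (α : Fin d →₀ ℕ) :
    cval g α ^ N = 1 ∧ g ((monomial α) (1:K)) = C (cval g α) * (monomial α) 1 := by
  choose c hc1 hc2 using diagX hN0 hξ hσ hdvd hg
  have key : g ((monomial α) (1:K)) = C (∏ j ∈ α.support, c j ^ α j) * (monomial α) 1 := by
    rw [← prod_X_pow_eq_monomial, map_prod]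
    have h : ∀ x ∈ α.support, g (X x ^ α x) = C (c x ^ α x) * X x ^ α x := by
      intro x _
      rw [map_pow, hc2 x, mul_pow, ← map_pow]
    rw [Finset.prod_congr rfl h, Finset.prod_mul_distrib,
      ← map_prod (C : K →+* MvPolynomial (Fin d) K) (fun x => c x ^ α x) α.support]
  have hcv : cval g α = ∏ j ∈ α.support, c j ^ α j := by
    rw [cval, key, coeff_C_mul, coeff_monomial, if_pos rfl, mul_one]
  rw [hcv]
  refine ⟨?_, key⟩
  rw [← Finset.prod_pow]
  apply Finset.prod_eq_one
  intro j _
  rw [← pow_mul, mul_comm, pow_mul, hc1 j, one_pow]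

lemma coeff_apply_g (hN0 : 0 < N) (hξ : ∀ i, ξ i ^ n i = 1)
    (hσ : ∀ i j, σ i (X j) = ξ i ^ t i j • X j) (hdvd : ∀ i, n i ∣ N)
    {g} (hg : g ∈ Ggen σ) (a : MvPolynomial (Fin d) K) (α : Fin d →₀ ℕ) :
    coeff α (g a) = cval g α * coeff α a := by
  have hmono : ∀ (v : Fin d →₀ ℕ) (k : K), g ((monomial v) k) = (monomial v) (k * cval g v) := by
    intro v k
    have h1 : (monomial v) k = C k * monomial v 1 := by rw [C_mul_monomial, mul_one]
    have h2 : g (C k) = C k := by rw [← MvPolynomial.algebraMap_eq]; exact g.commutes k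
    rw [h1, map_mul, h2, (cval_spec hN0 hξ hσ hdvd hg v).2, ← mul_assoc, ← C_mul,
      C_mul_monomial, mul_one]
  conv_lhs => rw [a.as_sum, map_sum]
  rw [coeff_sum]
  simp only [hmono, coeff_monomial]
  rw [Finset.sum_ite_eq' a.support α (fun v => coeff v a * cval g v)]
  by_cases h : α ∈ a.support
  · rw [if_pos h]; ring
  · rw [if_neg h, notMem_support_iff.mp h, mul_zero]

variable (hN0 : 0 < N) (hξ : ∀ i, ξ i ^ n i = 1)
    (hσ : ∀ i j, σ i (X j) = ξ i ^ t i j • X j) (hdvd : ∀ i, n i ∣ N)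

include hN0 hξ hσ hdvd

lemma XN_invariant (j : Fin d) : (X j : MvPolynomial (Fin d) K) ^ N ∈ invariants (Ggen σ) := by
  intro g hg
  obtain ⟨c, hc1, hc2⟩ := diagX hN0 hξ hσ hdvd hg j
  rw [map_pow, hc2, mul_pow, ← map_pow, hc1, C_1, one_mul]

lemma mono_invariant_of_mem {a : MvPolynomial (Fin d) K} (ha : a ∈ invariants (Ggen σ))
    {α : Fin d →₀ ℕ} (hα : α ∈ a.support) :
    ((monomial α) (1:K)) ∈ invariants (Ggen σ) := by
  intro g hg
  have h1 := coeff_apply_g hN0 hξ hσ hdvd hg a α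
  rw [ha g hg] at h1
  have h0 : coeff α a ≠ 0 := mem_support_iff.mp hα
  have hc : cval g α = 1 :=
    mul_right_cancel₀ h0 (h1.symm.trans (one_mul (coeff α a)).symm)
  rw [(cval_spec hN0 hξ hσ hdvd hg α).2, hc, C_1, one_mul]

lemma comp_invariant {a : MvPolynomial (Fin d) K} (ha : a ∈ invariants (Ggen σ)) (k : ℕ) :
    homogeneousComponent k a ∈ invariants (Ggen σ) := by
  intro g hg
  ext α
  rw [coeff_apply_g hN0 hξ hσ hdvd hg _ α, coeff_homogeneousComponent]
  split_ifs with h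
  · have h1 := coeff_apply_g hN0 hξ hσ hdvd hg a α
    rw [ha g hg] at h1
    rw [← h1]
  · rw [mul_zero]

lemma chi_pow_N (χ : Ggen σ →* Kˣ) {m : MvPolynomial (Fin d) K}
    (hm : m ∈ semiInvariants (Ggen σ) χ) (hm0 : m ≠ 0) (g : Ggen σ) :
    (χ g : K) ^ N = 1 := by
  obtain ⟨α, hα⟩ := support_nonempty.mpr hm0
  have h1 := coeff_apply_g hN0 hξ hσ hdvd g.2 m α
  rw [hm g, coeff_smul] at h1
  have h0 : coeff α m ≠ 0 := mem_support_iff.mp hα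
  have hc : (χ g : K) = cval (g : MvPolynomial (Fin d) K ≃ₐ[K] MvPolynomial (Fin d) K) α :=
    mul_right_cancel₀ h0 (by rw [← h1, smul_eq_mul])
  rw [hc]
  exact (cval_spec hN0 hξ hσ hdvd g.2 α).1

lemma pow_mem_invariants (χ : Ggen σ →* Kˣ) {m : MvPolynomial (Fin d) K}
    (hm : m ∈ semiInvariants (Ggen σ) χ) (hm0 : m ≠ 0) :
    m ^ N ∈ invariants (Ggen σ) := by
  intro g hg
  rw [map_pow, hm ⟨g, hg⟩, smul_pow, chi_pow_N hN0 hξ hσ hdvd χ hm hm0 ⟨g, hg⟩, one_smul]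

lemma mulpow_mem_invariants (χ : Ggen σ →* Kˣ) {m x : MvPolynomial (Fin d) K}
    (hm : m ∈ semiInvariants (Ggen σ) χ) (hx : x ∈ semiInvariants (Ggen σ) χ) (hm0 : m ≠ 0) :
    m ^ (N - 1) * x ∈ invariants (Ggen σ) := by
  intro g hg
  rw [map_mul, map_pow, hm ⟨g, hg⟩, hx ⟨g, hg⟩, smul_pow, smul_mul_smul_comm,
    ← pow_succ, Nat.sub_add_cancel hN0,
    chi_pow_N hN0 hξ hσ hdvd χ hm hm0 ⟨g, hg⟩, one_smul]

lemma key_identity (χ : Ggen σ →* Kˣ)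
    (f : semiInvariants (Ggen σ) χ →ₗ[invariants (Ggen σ)] invariants (Ggen σ))
    (m x : semiInvariants (Ggen σ) χ) (hm0 : (m : MvPolynomial (Fin d) K) ≠ 0) :
    (f x : MvPolynomial (Fin d) K) * (m : MvPolynomial (Fin d) K)
      = (f m : MvPolynomial (Fin d) K) * (x : MvPolynomial (Fin d) K) := by
  have hb : ((m : MvPolynomial (Fin d) K)) ^ N ∈ invariants (Ggen σ) :=
    pow_mem_invariants hN0 hξ hσ hdvd χ m.2 hm0
  have ha : ((m : MvPolynomial (Fin d) K)) ^ (N - 1) * (x : MvPolynomial (Fin d) K)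
      ∈ invariants (Ggen σ) := mulpow_mem_invariants hN0 hξ hσ hdvd χ m.2 x.2 hm0
  set b : invariants (Ggen σ) := ⟨_, hb⟩ with hbdef
  set a : invariants (Ggen σ) := ⟨_, ha⟩ with hadef
  have hNs : ((m : MvPolynomial (Fin d) K)) ^ N
      = ((m : MvPolynomial (Fin d) K)) ^ (N - 1) * (m : MvPolynomial (Fin d) K) := by
    conv_lhs => rw [← Nat.sub_add_cancel hN0]
    rw [pow_succ]
  have hsm : b • x = a • m := by
    apply Subtype.ext
    show (b : MvPolynomial (Fin d) K) * x = (a : MvPolynomial (Fin d) K) * m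
    rw [hbdef, hadef]
    dsimp only
    rw [hNs]; ring
  have hf : b • f x = a • f m := by rw [← map_smul, ← map_smul, hsm]
  have hval : ((m : MvPolynomial (Fin d) K)) ^ N * (f x : MvPolynomial (Fin d) K)
      = ((m : MvPolynomial (Fin d) K)) ^ (N - 1) * (x : MvPolynomial (Fin d) K)
        * (f m : MvPolynomial (Fin d) K) := congrArg Subtype.val hf
  apply mul_left_cancel₀ (pow_ne_zero (N - 1) hm0)
  calc ((m : MvPolynomial (Fin d) K)) ^ (N-1) * ((f x : MvPolynomial (Fin d) K) * m)
      = ((m : MvPolynomial (Fin d) K)) ^ N * (f x : MvPolynomial (Fin d) K) := by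
        rw [hNs]; ring
    _ = ((m : MvPolynomial (Fin d) K)) ^ (N-1) * (x : MvPolynomial (Fin d) K)
        * (f m : MvPolynomial (Fin d) K) := hval
    _ = ((m : MvPolynomial (Fin d) K)) ^ (N-1)
        * ((f m : MvPolynomial (Fin d) K) * (x : MvPolynomial (Fin d) K)) := by ring

lemma mem_of_support (p : Ideal (invariants (Ggen σ)))
    (hall : ∀ y : invariants (Ggen σ),
      (∃ j : Fin d, (y : MvPolynomial (Fin d) K) = X j ^ N) → y ∈ p)
    (k : ℕ) (c : invariants (Ggen σ))
    (hsupp : ∀ α ∈ (c : MvPolynomial (Fin d) K).support, ∃ j, N ≤ α j)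
    (hcard : (c : MvPolynomial (Fin d) K).support.card = k) : c ∈ p := by
  induction k using Nat.strong_induction_on generalizing c with
  | _ k ih =>
  by_cases h0 : (c : MvPolynomial (Fin d) K) = 0
  · have : c = 0 := Subtype.ext h0
    rw [this]; exact p.zero_mem
  obtain ⟨α, hα⟩ := support_nonempty.mpr h0
  obtain ⟨j, hj⟩ := hsupp α hα
  have hmono : ((monomial α) (1:K)) ∈ invariants (Ggen σ) :=
    mono_invariant_of_mem hN0 hξ hσ hdvd c.2 hα
  have hXNi : (X j : MvPolynomial (Fin d) K) ^ N ∈ invariants (Ggen σ) :=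
    XN_invariant hN0 hξ hσ hdvd j
  have hsum : Finsupp.single j N + (α - Finsupp.single j N) = α := by
    ext i
    rw [Finsupp.add_apply, Finsupp.tsub_apply]
    rcases eq_or_ne i j with rfl | hij
    · rw [Finsupp.single_eq_same, ← Nat.add_sub_assoc hj, Nat.add_sub_cancel_left]
    · rw [Finsupp.single_eq_of_ne' (Ne.symm hij), Nat.sub_zero, Nat.zero_add]
  have hprod : ∀ k0 : K, (X j : MvPolynomial (Fin d) K) ^ N
      * (monomial (α - Finsupp.single j N)) k0 = (monomial α) k0 := by
    intro k0
    rw [X_pow_eq_monomial, monomial_mul, one_mul, hsum]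
  have hmono2 : ((monomial (α - Finsupp.single j N)) (1:K)) ∈ invariants (Ggen σ) := by
    intro g hg
    have h2 : g ((monomial (Finsupp.single j N)) (1:K)) = (monomial (Finsupp.single j N)) 1 := by
      rw [← X_pow_eq_monomial]; exact hXNi g hg
    have h3 := hmono g hg
    have hprod' : (monomial (Finsupp.single j N)) (1:K)
        * (monomial (α - Finsupp.single j N)) 1 = (monomial α) (1:K) := by
      rw [← X_pow_eq_monomial]; exact hprod 1
    have h4 : g ((monomial (α - Finsupp.single j N)) (1:K))
          * (monomial (Finsupp.single j N)) (1:K)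
        = (monomial (α - Finsupp.single j N)) (1:K) * (monomial (Finsupp.single j N)) (1:K) :=
      calc g ((monomial (α - Finsupp.single j N)) (1:K)) * (monomial (Finsupp.single j N)) (1:K)
          = g ((monomial (α - Finsupp.single j N)) (1:K))
            * g ((monomial (Finsupp.single j N)) (1:K)) := by rw [h2]
        _ = g ((monomial (α - Finsupp.single j N)) (1:K)
            * (monomial (Finsupp.single j N)) (1:K)) := (map_mul _ _ _).symm
        _ = g ((monomial α) (1:K)) := by rw [mul_comm, hprod']
        _ = (monomial α) (1:K) := h3
        _ = (monomial (α - Finsupp.single j N)) (1:K)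
            * (monomial (Finsupp.single j N)) (1:K) := by rw [mul_comm, hprod']
    exact mul_right_cancel₀ (by simp [monomial_eq_zero]) h4
  have hCmem : ∀ k0 : K, (C k0 : MvPolynomial (Fin d) K) ∈ invariants (Ggen σ) := fun k0 => by
    rw [← MvPolynomial.algebraMap_eq]; exact Subalgebra.algebraMap_mem _ k0
  have hheadinv : (monomial α) (coeff α (c : MvPolynomial (Fin d) K)) ∈ invariants (Ggen σ) := by
    have h := mul_mem (hCmem (coeff α (c : MvPolynomial (Fin d) K))) hmono
    rwa [C_mul_monomial, mul_one] at h
  have hfac2 : (monomial (α - Finsupp.single j N)) (coeff α (c : MvPolynomial (Fin d) K))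
      ∈ invariants (Ggen σ) := by
    have h := mul_mem (hCmem (coeff α (c : MvPolynomial (Fin d) K))) hmono2
    rwa [C_mul_monomial, mul_one] at h
  have hheadp : (⟨_, hheadinv⟩ : invariants (Ggen σ)) ∈ p := by
    have heq : (⟨_, hheadinv⟩ : invariants (Ggen σ))
        = (⟨_, hXNi⟩ : invariants (Ggen σ)) * ⟨_, hfac2⟩ := by
      apply Subtype.ext
      show (monomial α) _ = X j ^ N * (monomial (α - Finsupp.single j N)) _
      rw [hprod]
    rw [heq]
    exact Ideal.mul_mem_right _ p (hall _ ⟨j, rfl⟩)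
  have hco : ∀ β, coeff β ((c - ⟨_, hheadinv⟩ : invariants (Ggen σ)) : MvPolynomial (Fin d) K)
      = coeff β (c : MvPolynomial (Fin d) K)
        - (if α = β then coeff α (c : MvPolynomial (Fin d) K) else 0) := by
    intro β
    rw [AddSubgroupClass.coe_sub, coeff_sub]
    congr 1
    exact coeff_monomial β α _
  have htsupp : ((c - ⟨_, hheadinv⟩ : invariants (Ggen σ)) : MvPolynomial (Fin d) K).support
      = ((c : MvPolynomial (Fin d) K)).support.erase α := by
    ext β
    rw [Finset.mem_erase, mem_support_iff, mem_support_iff, hco β]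
    rcases eq_or_ne β α with rfl | hβ
    · simp
    · rw [if_neg (Ne.symm hβ), sub_zero]
      simp [hβ]
  have htcard : ((c - ⟨_, hheadinv⟩ : invariants (Ggen σ))
      : MvPolynomial (Fin d) K).support.card < k := by
    rw [htsupp, ← hcard]
    exact Finset.card_erase_lt_of_mem hα
  have htailp : c - (⟨_, hheadinv⟩ : invariants (Ggen σ)) ∈ p := by
    apply ih _ htcard _ _ rfl
    intro β hβ
    rw [htsupp] at hβ
    exact hsupp β (Finset.mem_of_mem_erase hβ)
  have hfin : c = (⟨_, hheadinv⟩ : invariants (Ggen σ)) + (c - ⟨_, hheadinv⟩) := by ring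
  rw [hfin]
  exact p.add_mem hheadp htailp

lemma p_le_mG (p : Ideal (invariants (Ggen σ))) [hp : p.IsPrime]
    (hgr : IsGradedIdeal (Ggen σ) p) : p ≤ mG (Ggen σ) := by
  intro a ha
  rw [mG, RingHom.mem_ker, RingHom.comp_apply]
  by_contra h0
  have hb := hgr a ha 0 ⟨_, C_mem_invariants (Ggen σ)
      (constantCoeff (a : MvPolynomial (Fin d) K))⟩ (by
    rw [homogeneousComponent_zero, constantCoeff_eq])
  have hu : IsUnit (⟨_, C_mem_invariants (Ggen σ)
      (constantCoeff (a : MvPolynomial (Fin d) K))⟩ : invariants (Ggen σ)) := by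
    refine isUnit_iff_exists_inv.mpr ⟨⟨_, C_mem_invariants (Ggen σ)
      (constantCoeff (a : MvPolynomial (Fin d) K))⁻¹⟩, ?_⟩
    have h0' : constantCoeff (a : MvPolynomial (Fin d) K) ≠ 0 := h0
    apply Subtype.ext
    show C _ * C _ = 1
    rw [← C_mul, mul_inv_cancel₀ h0', C_1]
  exact hp.ne_top (p.eq_top_of_isUnit_mem hb hu)

lemma mG_le_p (hd' : 0 < d) (p : Ideal (invariants (Ggen σ))) [hp : p.IsPrime]
    (hgr : IsGradedIdeal (Ggen σ) p)
    (hXp : ∀ y : invariants (Ggen σ),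
      (∃ j : Fin d, (y : MvPolynomial (Fin d) K) = X j ^ N) → y ∈ p) :
    mG (Ggen σ) ≤ p := by
  intro a ha
  rw [mG, RingHom.mem_ker, RingHom.comp_apply] at ha
  have hcomp : ∀ k : ℕ, homogeneousComponent k (a : MvPolynomial (Fin d) K)
      ∈ invariants (Ggen σ) := fun k => comp_invariant hN0 hξ hσ hdvd a.2 k
  have hsum : a = ∑ k ∈ Finset.range ((a : MvPolynomial (Fin d) K).totalDegree + 1),
      (⟨_, hcomp k⟩ : invariants (Ggen σ)) := by
    apply Subtype.ext
    rw [AddSubmonoidClass.coe_finset_sum]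
    exact (sum_homogeneousComponent _).symm
  rw [hsum]
  apply Ideal.sum_mem
  intro k _
  rcases Nat.eq_zero_or_pos k with rfl | hk0
  · have hz : (⟨_, hcomp 0⟩ : invariants (Ggen σ)) = 0 := by
      apply Subtype.ext
      show homogeneousComponent 0 (a : MvPolynomial (Fin d) K) = 0
      have ha' : constantCoeff (a : MvPolynomial (Fin d) K) = 0 := ha
      rw [homogeneousComponent_zero, ← constantCoeff_eq, ha', C_0]
    rw [hz]; exact p.zero_mem
  · apply hp.mem_of_pow_mem (d * N)
    apply mem_of_support hN0 hξ hσ hdvd p hXp _ _ ?_ rfl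
    intro β hβ
    by_contra hco
    push_neg at hco
    have hpow : ((homogeneousComponent k (a : MvPolynomial (Fin d) K)) ^ (d * N)).IsHomogeneous
        (k * (d * N)) := (homogeneousComponent_isHomogeneous k _).pow (d * N)
    have hβ' : coeff β ((homogeneousComponent k (a : MvPolynomial (Fin d) K)) ^ (d * N)) ≠ 0 := by
      have := mem_support_iff.mp hβ
      rwa [SubmonoidClass.coe_pow] at this
    have hdeg : β.degree = k * (d * N) := by
      by_contra hne
      exact hβ' (hpow.coeff_eq_zero hne)
    have hlt : β.degree < d * N := by
      calc β.degree = ∑ i ∈ β.support, β i := rfl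
        _ ≤ ∑ i : Fin d, β i := Finset.sum_le_sum_of_subset (Finset.subset_univ _)
        _ ≤ ∑ _i : Fin d, (N - 1) := Finset.sum_le_sum
            (fun i _ => Nat.le_sub_one_of_lt (hco i))
        _ = d * (N - 1) := by rw [Finset.sum_const, Finset.card_univ, Fintype.card_fin,
            smul_eq_mul]
        _ < d * N := Nat.mul_lt_mul_of_pos_left (Nat.sub_lt hN0 one_pos) hd'
    have hge : d * N ≤ k * (d * N) := Nat.le_mul_of_pos_left _ hk0
    rw [hdeg] at hlt
    exact absurd (lt_of_le_of_lt hge hlt) (lt_irrefl _)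

end auxlemmas

lemma free_of_trace {A : Type*} [CommRing A] [IsDomain A] {M : Type*} [AddCommGroup M]
    [Module A M] (p : Ideal A) [p.IsPrime] (f : M →ₗ[A] A) (m : M)
    (hfm : f m ∉ p)
    (hkey : ∀ x : M, f x • m = f m • x)
    (htf : ∀ (a : A) (x : M), a • x = 0 → a = 0 ∨ x = 0) :
    Module.Free (Localization p.primeCompl) (LocalizedModule p.primeCompl M) := by
  set S := p.primeCompl with hS
  have hfmS : f m ∈ S := hfm
  have hm0 : m ≠ 0 := by
    rintro rfl
    exact hfm (by rw [map_zero]; exact p.zero_mem)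
  set Φ : Localization S →ₗ[Localization S] LocalizedModule S M :=
    LinearMap.toSpanSingleton (Localization S) (LocalizedModule S M) (LocalizedModule.mk m 1)
    with hΦ
  have hinj : Function.Injective Φ := by
    intro y y' hyy
    induction y using Localization.induction_on with
    | H u =>
    induction y' using Localization.induction_on with
    | H v =>
    obtain ⟨a, s⟩ := u
    obtain ⟨b, r⟩ := v
    simp only [hΦ, LinearMap.toSpanSingleton_apply, Localization.mk_eq_mk',
      ← Localization.mk_eq_mk'] at hyy
    rw [LocalizedModule.mk_smul_mk, LocalizedModule.mk_smul_mk, LocalizedModule.mk_eq] at hyy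
    obtain ⟨c, hc⟩ := hyy
    -- c • (r*1) • (a • m) = c • (s*1) • (b • m)
    simp only [Submonoid.smul_def, Submonoid.coe_mul, Submonoid.coe_one, mul_one,
      ← mul_smul] at hc
    have hc' : ((c : A) * ((r : A) * a) - (c : A) * ((s : A) * b)) • m = 0 := by
      rw [sub_smul, hc, sub_self]
    rcases htf _ _ hc' with h | h
    · have hcne : (c : A) ≠ 0 := fun h0 => c.2 (h0 ▸ p.zero_mem)
      have h3 : (r : A) * a = (s : A) * b := by
        have h2 : (c : A) * ((r : A) * a - (s : A) * b) = 0 := by linear_combination h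
        rcases mul_eq_zero.mp h2 with h | h
        · exact absurd h hcne
        · exact sub_eq_zero.mp h
      rw [Localization.mk_eq_mk', IsLocalization.mk'_eq_iff_eq]
      exact congrArg _ (by dsimp only; linear_combination h3)
    · exact absurd h hm0
  have hsurj : Function.Surjective Φ := by
    intro z
    induction z using LocalizedModule.induction_on with
    | h x s =>
      refine ⟨Localization.mk (f x) (s * ⟨f m, hfmS⟩), ?_⟩
      simp only [hΦ, LinearMap.toSpanSingleton_apply]
      rw [LocalizedModule.mk_smul_mk, mul_one, hkey x]
      have h4 : f m • x = (⟨f m, hfmS⟩ : S) • x := rfl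
      rw [h4, LocalizedModule.mk_cancel_common_right]
  exact Module.Free.of_equiv (LinearEquiv.ofBijective Φ ⟨hinj, hsurj⟩)



/-- Theorem 3.11, implications (3) ⇒ (2) ⇒ (1): with `n = n_1 ⋯ n_ℓ`,
(3) every variable has a power `X_j^{u_j}` (`0 < u_j ≤ n`) lying in `R^𝒳`, implies
(2) the ideal `(X_1^n, …, X_d^n)` of `R^G` is contained in `tr_{R^G}(R^𝒳)`, implies
(1) `R^𝒳` is locally free on the graded spectrum of `R^G` minus `m_G`. -/
theorem statement9 [IsAlgClosed K] {ℓ : ℕ} (hd : 2 ≤ d) (hℓ : 1 ≤ ℓ)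
    (n : Fin ℓ → ℕ) (hn : ∀ i, 0 < n i) (hchar : ∀ i, (n i : K) ≠ 0)
    (ξ : Fin ℓ → K) (hξ : ∀ i, IsPrimitiveRoot (ξ i) (n i))
    (t : Fin ℓ → Fin d → ℕ)
    (hgcd : ∀ i, Nat.gcd (Finset.univ.gcd (t i)) (n i) = 1)
    (σ : Fin ℓ → (MvPolynomial (Fin d) K ≃ₐ[K] MvPolynomial (Fin d) K))
    (hσ : ∀ i j, σ i (X j) = ξ i ^ t i j • X j)
    (N : ℕ) (hN : N = ∏ i, n i)
    (χ : Ggen σ →* Kˣ) :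
    ((∀ j : Fin d, ∃ u : ℕ, 0 < u ∧ u ≤ N ∧
        (X j : MvPolynomial (Fin d) K) ^ u ∈ semiInvariants (Ggen σ) χ) →
      Ideal.span {x : invariants (Ggen σ) |
          ∃ j : Fin d, (x : MvPolynomial (Fin d) K) = X j ^ N} ≤
        traceIdeal (invariants (Ggen σ)) (semiInvariants (Ggen σ) χ)) ∧
    ((Ideal.span {x : invariants (Ggen σ) |
          ∃ j : Fin d, (x : MvPolynomial (Fin d) K) = X j ^ N} ≤
        traceIdeal (invariants (Ggen σ)) (semiInvariants (Ggen σ) χ)) →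
      ∀ (p : Ideal (invariants (Ggen σ))) [p.IsPrime],
        IsGradedIdeal (Ggen σ) p → p ≠ mG (Ggen σ) →
          Module.Free (Localization p.primeCompl)
            (LocalizedModule p.primeCompl (semiInvariants (Ggen σ) χ))) := by
  have hN0 : 0 < N := by
    rw [hN]; exact Finset.prod_pos (fun i _ => hn i)
  have hξ' : ∀ i, ξ i ^ n i = 1 := fun i => (hξ i).pow_eq_one
  have hdvd : ∀ i, n i ∣ N := fun i => hN ▸ Finset.dvd_prod_of_mem n (Finset.mem_univ i)
  have hd' : 0 < d := lt_of_lt_of_le two_pos hd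
  constructor
  · intro h3
    rw [Ideal.span_le]
    rintro x ⟨j, hxj⟩
    obtain ⟨u, hu0, huN, huM⟩ := h3 j
    have hfinv : ∀ y : semiInvariants (Ggen σ) χ,
        (X j : MvPolynomial (Fin d) K) ^ (N - u) * (y : MvPolynomial (Fin d) K)
          ∈ invariants (Ggen σ) := by
      intro y g hg
      obtain ⟨c, hc1, hc2⟩ := diagX hN0 hξ' hσ hdvd hg j
      have hχ : (χ ⟨g, hg⟩ : K) = c ^ u := by
        have h1 := huM ⟨g, hg⟩
        rw [map_pow, hc2, mul_pow, ← map_pow, ← smul_eq_C_mul] at h1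
        have h2 : ((c ^ u - (χ ⟨g, hg⟩ : K)) • ((X j : MvPolynomial (Fin d) K) ^ u)) = 0 := by
          rw [sub_smul, h1, sub_self]
        rcases smul_eq_zero.mp h2 with h | h
        · exact (sub_eq_zero.mp h).symm
        · exact absurd h (pow_ne_zero u (X_ne_zero j))
      rw [map_mul, map_pow, hc2, mul_pow, ← map_pow, ← smul_eq_C_mul, y.2 ⟨g, hg⟩, hχ,
        smul_mul_smul_comm, ← pow_add, Nat.sub_add_cancel huN, hc1, one_smul]
    set f : semiInvariants (Ggen σ) χ →ₗ[invariants (Ggen σ)] invariants (Ggen σ) :=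
      { toFun := fun y => ⟨_, hfinv y⟩
        map_add' := fun y z => by
          apply Subtype.ext
          show (X j : MvPolynomial (Fin d) K) ^ (N - u)
              * ((y : MvPolynomial (Fin d) K) + (z : MvPolynomial (Fin d) K))
            = X j ^ (N - u) * (y : MvPolynomial (Fin d) K)
              + X j ^ (N - u) * (z : MvPolynomial (Fin d) K)
          ring
        map_smul' := fun s y => by
          apply Subtype.ext
          show (X j : MvPolynomial (Fin d) K) ^ (N - u)
              * ((s : MvPolynomial (Fin d) K) * (y : MvPolynomial (Fin d) K))
            = (s : MvPolynomial (Fin d) K)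
              * (X j ^ (N - u) * (y : MvPolynomial (Fin d) K))
          ring } with hf
    have hx : x = f ⟨X j ^ u, huM⟩ := by
      apply Subtype.ext
      rw [hxj]
      show (X j : MvPolynomial (Fin d) K) ^ N = X j ^ (N - u) * X j ^ u
      rw [← pow_add, Nat.sub_add_cancel huN]
    have hmem : x ∈ LinearMap.range f := ⟨⟨X j ^ u, huM⟩, hx.symm⟩
    unfold traceIdeal
    exact (le_iSup (fun f0 : semiInvariants (Ggen σ) χ →ₗ[invariants (Ggen σ)]
      invariants (Ggen σ) => LinearMap.range f0) f) hmem
  · intro h2 p hp hgr hne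
    have hex : ∃ y : invariants (Ggen σ),
        (∃ j : Fin d, (y : MvPolynomial (Fin d) K) = X j ^ N) ∧ y ∉ p := by
      by_contra hc
      push_neg at hc
      exact hne (le_antisymm (p_le_mG hN0 hξ' hσ hdvd p hgr)
        (mG_le_p hN0 hξ' hσ hdvd hd' p hgr (fun y hy => hc y hy)))
    obtain ⟨y, hyX, hyp⟩ := hex
    have hyT : y ∈ traceIdeal (invariants (Ggen σ)) (semiInvariants (Ggen σ) χ) :=
      h2 (Ideal.subset_span hyX)
    have hfm : ∃ f : semiInvariants (Ggen σ) χ →ₗ[invariants (Ggen σ)] invariants (Ggen σ),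
        ∃ m, f m ∉ p := by
      by_contra hcon
      push_neg at hcon
      apply hyp
      have hle : traceIdeal (invariants (Ggen σ)) (semiInvariants (Ggen σ) χ) ≤ p := by
        unfold traceIdeal
        apply iSup_le
        intro f
        rintro z ⟨w, rfl⟩
        exact hcon f w
      exact hle hyT
    obtain ⟨f, m, hfmp⟩ := hfm
    have hm0 : (m : MvPolynomial (Fin d) K) ≠ 0 := by
      intro h
      apply hfmp
      have hm : m = 0 := Subtype.ext h
      rw [hm, map_zero]
      exact p.zero_mem
    apply free_of_trace p f m hfmp
    · intro x
      apply Subtype.ext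
      show (f x : MvPolynomial (Fin d) K) * (m : MvPolynomial (Fin d) K)
        = (f m : MvPolynomial (Fin d) K) * (x : MvPolynomial (Fin d) K)
      exact key_identity hN0 hξ' hσ hdvd χ f m x hm0
    · intro a x hax
      have hval : (a : MvPolynomial (Fin d) K) * (x : MvPolynomial (Fin d) K) = 0 :=
        congrArg Subtype.val hax
      rcases mul_eq_zero.mp hval with h | h
      · exact Or.inl (Subtype.ext h)
      · exact Or.inr (Subtype.ext h)

end
end

section
/- Let A be a commutative Noetherian ℕ-graded ring possessing a unique maximal element among its proper graded ideals, and let M be a finitely generated graded A-module. Then: (a) tr_A(M) = A if and only if M has a nonzero free A-module as a direct summand; and (b) for every graded prime ideal p of A, p does not contain tr_A(M) if and only if the localization M_p has a nonzero free A_p-module as a direct summand. -/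
set_option synthInstance.maxHeartbeats 1000000
set_option maxHeartbeats 1000000

noncomputable section

section Aux

variable {R X : Type*} [CommRing R] [AddCommGroup X] [Module R X]

lemma aux_exists_one_of_free_summand
    (N P : Submodule R X) (hc : IsCompl N P) (hne : N ≠ ⊥) (hfree : Module.Free R N) :
    ∃ (h : X →ₗ[R] R) (z : X), h z = 1 := by
  haveI := hfree
  haveI : Nontrivial N := Submodule.nontrivial_iff_ne_bot.mpr hne
  obtain ⟨i⟩ := (Module.Free.chooseBasis R N).index_nonempty
  set b := Module.Free.chooseBasis R N
  refine ⟨(b.coord i).comp (N.projectionOnto P hc), b i, ?_⟩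
  simp [b.coord_apply, Submodule.projectionOnto_apply_left]

lemma aux_free_summand_of_surjective [Nontrivial R]
    (h : X →ₗ[R] R) (hs : Function.Surjective h) :
    ∃ N P : Submodule R X, IsCompl N P ∧ N ≠ ⊥ ∧ Module.Free R N := by
  obtain ⟨s, hsec⟩ := h.exists_rightInverse_of_surjective (LinearMap.range_eq_top.mpr hs)
  have hsi : ∀ a, h (s a) = a := fun a => LinearMap.congr_fun hsec a
  have sinj : Function.Injective s := fun a b hab => by rw [← hsi a, hab, hsi]
  refine ⟨LinearMap.range s, LinearMap.ker h, ⟨?_, ?_⟩, ?_, ?_⟩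
  · rw [Submodule.disjoint_def]
    rintro x ⟨a, rfl⟩ hk
    have : a = 0 := by rw [← hsi a]; exact LinearMap.mem_ker.mp hk
    rw [this, map_zero]
  · refine codisjoint_iff_le_sup.mpr fun x _ => Submodule.mem_sup.mpr
      ⟨s (h x), ⟨h x, rfl⟩, x - s (h x), ?_, by abel⟩
    simp [LinearMap.mem_ker, hsi]
  · intro hb
    have h1 : s 1 = 0 := by
      have : s 1 ∈ (⊥ : Submodule R X) := hb ▸ LinearMap.mem_range_self s 1
      simpa using this
    have : (1 : R) = 0 := by rw [← hsi 1, h1, map_zero]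
    exact one_ne_zero this
  · exact Module.Free.of_equiv (LinearEquiv.ofInjective s sinj)

end Aux

section Graded

variable {A : Type*} [CommRing A] (𝒜 : ℕ → AddSubgroup A) [GradedRing 𝒜]
variable {M : Type*} [AddCommGroup M] [Module A M] (ℳ : ℕ → AddSubgroup M)
  [SetLike.GradedSMul 𝒜 ℳ] [DirectSum.Decomposition ℳ]

/-- Projection of `A` onto its degree-`k` component, with `ℤ`-valued index. -/
def projZ (k : ℤ) : A →+ A :=
  if 0 ≤ k then
    { toFun := fun a => (DirectSum.decompose 𝒜 a k.toNat : A)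
      map_zero' := by simp
      map_add' := fun a b => by simp }
  else 0

lemma projZ_of_nonneg {k : ℤ} (h : 0 ≤ k) (a : A) :
    projZ 𝒜 k a = (DirectSum.decompose 𝒜 a k.toNat : A) := by
  rw [projZ, if_pos h]; rfl

lemma projZ_of_neg {k : ℤ} (h : ¬ 0 ≤ k) (a : A) : projZ 𝒜 k a = 0 := by
  rw [projZ, if_neg h]; rfl

lemma projZ_mul {j : ℕ} {a : A} (ha : a ∈ 𝒜 j) (k : ℤ) (z : A) :
    projZ 𝒜 ((j : ℤ) + k) (a * z) = a * projZ 𝒜 k z := by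
  by_cases hk : 0 ≤ k
  · have h1 : (0 : ℤ) ≤ (j : ℤ) + k := add_nonneg (Int.ofNat_nonneg j) hk
    rw [projZ_of_nonneg 𝒜 h1, projZ_of_nonneg 𝒜 hk]
    have h2 : ((j : ℤ) + k).toNat = j + k.toNat := by omega
    rw [h2, DirectSum.coe_decompose_mul_of_left_mem_of_le 𝒜 ha (Nat.le_add_right _ _)]
    have h3 : j + k.toNat - j = k.toNat := by omega
    rw [h3]
  · by_cases h1 : 0 ≤ (j : ℤ) + k
    · rw [projZ_of_nonneg 𝒜 h1, projZ_of_neg 𝒜 hk, mul_zero]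
      have hlt : ¬ j ≤ ((j : ℤ) + k).toNat := by omega
      exact DirectSum.coe_decompose_mul_of_left_mem_of_not_le 𝒜 ha hlt
    · rw [projZ_of_neg 𝒜 h1, projZ_of_neg 𝒜 hk, mul_zero]

/-- The degree-`n` graded component of a linear functional, as an additive map. -/
def gAdd (f : M →ₗ[A] A) (n : ℤ) : M →+ A :=
  (DirectSum.toAddMonoid
      (fun (d : ℕ) => (projZ 𝒜 ((d : ℤ) + n)).comp
        (f.toAddMonoidHom.comp ((ℳ d).subtype)))).comp
    (DirectSum.decomposeAddEquiv ℳ).toAddMonoidHom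

lemma gAdd_of_mem (f : M →ₗ[A] A) (n : ℤ) {d : ℕ} {y : M} (hy : y ∈ ℳ d) :
    gAdd 𝒜 ℳ f n y = projZ 𝒜 ((d : ℤ) + n) (f y) := by
  have h1 : DirectSum.decompose ℳ y = DirectSum.of (fun i => (ℳ i : AddSubgroup M)) d ⟨y, hy⟩ :=
    DirectSum.decompose_of_mem ℳ hy
  show DirectSum.toAddMonoid _ ((DirectSum.decomposeAddEquiv ℳ) y) = _
  rw [DirectSum.decomposeAddEquiv_apply, h1, DirectSum.toAddMonoid_of]
  rfl

lemma gAdd_smul (f : M →ₗ[A] A) (n : ℤ) (a : A) (x : M) :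
    gAdd 𝒜 ℳ f n (a • x) = a * gAdd 𝒜 ℳ f n x := by
  revert x
  refine DirectSum.Decomposition.inductionOn 𝒜
    (motive := fun a => ∀ x : M, gAdd 𝒜 ℳ f n (a • x) = a * gAdd 𝒜 ℳ f n x) ?_ ?_ ?_ a
  · intro x; simp
  · intro j aj
    obtain ⟨a, haj⟩ := aj
    intro x
    refine DirectSum.Decomposition.inductionOn ℳ
      (motive := fun x => gAdd 𝒜 ℳ f n (a • x) = a * gAdd 𝒜 ℳ f n x) ?_ ?_ ?_ x
    · simp
    · intro d yd
      obtain ⟨y, hyd⟩ := yd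
      have h1 : a • y ∈ ℳ (j + d) := SetLike.GradedSMul.smul_mem haj hyd
      rw [gAdd_of_mem 𝒜 ℳ f n h1, gAdd_of_mem 𝒜 ℳ f n hyd]
      rw [map_smul, smul_eq_mul]
      have h2 : ((j + d : ℕ) : ℤ) + n = (j : ℤ) + ((d : ℤ) + n) := by push_cast; ring
      rw [h2, projZ_mul 𝒜 haj]
    · intro x y hx hy
      rw [smul_add, map_add, hx, hy, map_add, mul_add]
  · intro a b ha hb x
    rw [add_smul, map_add, ha, hb, add_mul]

/-- The degree-`n` graded component of a linear functional. -/
def glin (f : M →ₗ[A] A) (n : ℤ) : M →ₗ[A] A where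
  toFun := gAdd 𝒜 ℳ f n
  map_add' := map_add _
  map_smul' := fun a x => by rw [RingHom.id_apply, smul_eq_mul]; exact gAdd_smul 𝒜 ℳ f n a x

lemma glin_of_mem (f : M →ₗ[A] A) (n : ℤ) {d : ℕ} {y : M} (hy : y ∈ ℳ d) :
    glin 𝒜 ℳ f n y = projZ 𝒜 ((d : ℤ) + n) (f y) :=
  gAdd_of_mem 𝒜 ℳ f n hy

lemma glin_range_homogeneous (f : M →ₗ[A] A) (n : ℤ) :
    Ideal.IsHomogeneous 𝒜 (LinearMap.range (glin 𝒜 ℳ f n)) := by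
  intro i r hr
  obtain ⟨x, rfl⟩ := hr
  revert i
  refine DirectSum.Decomposition.inductionOn ℳ
    (motive := fun x => ∀ i : ℕ, (DirectSum.decompose 𝒜 (glin 𝒜 ℳ f n x) i : A) ∈
      LinearMap.range (glin 𝒜 ℳ f n)) ?_ ?_ ?_ x
  · intro i; simp
  · intro d yd i
    obtain ⟨y, hyd⟩ := yd
    have hv := glin_of_mem 𝒜 ℳ f n hyd
    by_cases h : 0 ≤ (d : ℤ) + n
    · rw [projZ_of_nonneg 𝒜 h] at hv
      have hmem : glin 𝒜 ℳ f n y ∈ 𝒜 (((d : ℤ) + n).toNat) := hv ▸ SetLike.coe_mem _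
      by_cases hi : ((d : ℤ) + n).toNat = i
      · subst hi
        rw [DirectSum.decompose_of_mem_same 𝒜 hmem]
        exact ⟨y, rfl⟩
      · rw [DirectSum.decompose_of_mem_ne 𝒜 hmem hi]
        exact zero_mem _
    · rw [projZ_of_neg 𝒜 h] at hv
      rw [hv]
      simp
  · intro x y hx hy i
    rw [map_add, DirectSum.decompose_add, DirectSum.add_apply, AddSubgroup.coe_add]
    exact add_mem (hx i) (hy i)

lemma traceIdeal_le_of_glin_le (I : Ideal A)
    (hI : ∀ (f : M →ₗ[A] A) (n : ℤ), LinearMap.range (glin 𝒜 ℳ f n) ≤ I) :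
    traceIdeal A M ≤ I := by
  classical
  refine iSup_le fun f => ?_
  rintro _ ⟨x, rfl⟩
  refine DirectSum.Decomposition.inductionOn ℳ (motive := fun x => f x ∈ I) ?_ ?_ ?_ x
  · simp
  · intro d yd
    obtain ⟨y, hyd⟩ := yd
    rw [← DirectSum.sum_support_decompose 𝒜 (f y)]
    refine sum_mem fun e _ => ?_
    have key : (DirectSum.decompose 𝒜 (f y) e : A) = glin 𝒜 ℳ f ((e : ℤ) - (d : ℤ)) y := by
      rw [glin_of_mem 𝒜 ℳ f _ hyd]
      have h1 : (d : ℤ) + ((e : ℤ) - (d : ℤ)) = (e : ℤ) := by ring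
      rw [h1, projZ_of_nonneg 𝒜 (Int.ofNat_nonneg e)]
      simp
    rw [key]
    exact hI f _ ⟨y, rfl⟩
  · intro x y hx hy
    rw [map_add]
    exact add_mem hx hy

end Graded

/-- Remark 2.2(4): let `A` be a commutative Noetherian ℕ-graded ring with a unique
maximal element `m` among its proper graded ideals, and `M` a finitely generated
graded `A`-module. Then (a) `tr_A(M) = A` iff `M` has a nonzero free direct summand,
and (b) a graded prime `p` does not contain `tr_A(M)` iff `M_p` has a nonzero free
`A_p`-direct summand. -/
theorem statement15 {A : Type*} [CommRing A] [IsNoetherianRing A]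
    (𝒜 : ℕ → AddSubgroup A) [GradedRing 𝒜]
    (m : Ideal A) (hm_hom : Ideal.IsHomogeneous 𝒜 m) (hm_ne : m ≠ ⊤)
    (hm_max : ∀ I : Ideal A, Ideal.IsHomogeneous 𝒜 I → I ≠ ⊤ → I ≤ m)
    {M : Type*} [AddCommGroup M] [Module A M] [Module.Finite A M]
    (ℳ : ℕ → AddSubgroup M) [SetLike.GradedSMul 𝒜 ℳ] [DirectSum.Decomposition ℳ] :
    (traceIdeal A M = ⊤ ↔
      ∃ N P : Submodule A M, IsCompl N P ∧ N ≠ ⊥ ∧ Module.Free A N) ∧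
    (∀ (p : Ideal A) [p.IsPrime], Ideal.IsHomogeneous 𝒜 p →
      (¬ traceIdeal A M ≤ p ↔
        ∃ N P : Submodule (Localization p.primeCompl) (LocalizedModule p.primeCompl M),
          IsCompl N P ∧ N ≠ ⊥ ∧ Module.Free (Localization p.primeCompl) N)) := by
  haveI : Nontrivial A := by
    by_contra hA
    rw [not_nontrivial_iff_subsingleton] at hA
    exact hm_ne (Subsingleton.elim _ _)
  haveI : Module.FinitePresentation A M := Module.finitePresentation_of_finite A M
  constructor
  · constructor
    · intro htop
      by_cases hex : ∃ g : M →ₗ[A] A, Function.Surjective g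
      · obtain ⟨g, hg⟩ := hex
        exact aux_free_summand_of_surjective g hg
      · exfalso
        have hle : traceIdeal A M ≤ m := by
          refine traceIdeal_le_of_glin_le 𝒜 ℳ m fun f n => ?_
          refine hm_max _ (glin_range_homogeneous 𝒜 ℳ f n) fun htop' => ?_
          exact hex ⟨glin 𝒜 ℳ f n, LinearMap.range_eq_top.mp htop'⟩
        rw [htop, top_le_iff] at hle
        exact hm_ne hle
    · rintro ⟨N, P, hc, hne, hfree⟩
      obtain ⟨h, z, hz⟩ := aux_exists_one_of_free_summand N P hc hne hfree
      rw [Ideal.eq_top_iff_one]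
      have : (1 : A) ∈ LinearMap.range h := ⟨z, hz⟩
      exact (le_iSup (fun f : M →ₗ[A] A => LinearMap.range f) h) this
  · intro p hp hphom
    set S := p.primeCompl
    set Rₛ := Localization p.primeCompl
    set fℓ := LocalizedModule.mkLinearMap S M
    set gℓ := Algebra.linearMap A Rₛ
    set Φ := IsLocalizedModule.mapExtendScalars S fℓ gℓ Rₛ
    haveI : IsLocalizedModule S Φ :=
      Module.FinitePresentation.isLocalizedModule_mapExtendScalars S fℓ gℓ Rₛ
    constructor
    · intro hnle
      have : ∃ f : M →ₗ[A] A, ¬ LinearMap.range f ≤ p := by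
        by_contra hall
        push_neg at hall
        exact hnle (iSup_le hall)
      obtain ⟨f, hf⟩ := this
      obtain ⟨y, ⟨x, rfl⟩, hy⟩ := Set.not_subset.mp hf
      have hu : IsUnit (algebraMap A Rₛ (f x)) :=
        IsLocalization.map_units Rₛ (⟨f x, hy⟩ : S)
      have happ : (Φ f) (fℓ x) = algebraMap A Rₛ (f x) := by
        have := IsLocalizedModule.map_apply S fℓ gℓ f x
        simpa [Φ, gℓ, Algebra.linearMap_apply, IsLocalizedModule.mapExtendScalars_apply_apply] using this
      have hsurj : Function.Surjective (Φ f) := by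
        intro y
        refine ⟨(y * ↑hu.unit⁻¹) • fℓ x, ?_⟩
        rw [map_smul, happ, smul_eq_mul, mul_assoc, IsUnit.val_inv_mul, mul_one]
      exact aux_free_summand_of_surjective (Φ f) hsurj
    · rintro ⟨N, P, hc, hne, hfree⟩ hle
      obtain ⟨h, z, hz⟩ := aux_exists_one_of_free_summand N P hc hne hfree
      obtain ⟨⟨f, s⟩, hfs⟩ := IsLocalizedModule.surj S Φ h
      obtain ⟨⟨x, t⟩, hxt⟩ := IsLocalizedModule.surj S fℓ z
      have hxt' : (t : A) • z = fℓ x := hxt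
      have hfs' : (s : A) • h = Φ f := hfs
      have h1 : h (fℓ x) = algebraMap A Rₛ t := by
        rw [← hxt', ← algebraMap_smul Rₛ (t : A) z, map_smul, hz, smul_eq_mul, mul_one]
      have h2 : algebraMap A Rₛ (↑s * ↑t) = algebraMap A Rₛ (f x) := by
        have := LinearMap.congr_fun hfs' (fℓ x)
        rw [LinearMap.smul_apply, h1, IsLocalizedModule.mapExtendScalars_apply_apply] at this
        rw [map_mul]
        rw [Algebra.smul_def] at this
        rw [this]
        simpa [gℓ, Algebra.linearMap_apply] using (IsLocalizedModule.map_apply S fℓ gℓ f x).symm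
      obtain ⟨c, hc'⟩ := (IsLocalization.eq_iff_exists S Rₛ).mp h2
      have hmem : (↑c * (↑s * ↑t) : A) ∈ p := by
        rw [hc']
        refine Ideal.mul_mem_left p _ ?_
        refine hle ?_
        exact (le_iSup (fun f : M →ₗ[A] A => LinearMap.range f) f) ⟨x, rfl⟩
      have : (↑c * (↑s * ↑t) : A) ∈ S := mul_mem c.2 (mul_mem s.2 t.2)
      exact this hmem

end
end

section
/- In the specific setup below (d = 3, ℓ = 2, n_1 = 4, n_2 = 6, (t_{11},t_{12},t_{13}) = (1,1,1), (t_{21},t_{22},t_{23}) = (1,2,3)): (i) R^𝒳 ≠ 0 for every character 𝒳 of G; and (ii) the monomial X_1^{12} X_3^{24} belongs to tr_{R^G}(R^{(1,0)}) but does not belong to the ideal R^{(1,0)} · R^{(3,0)} of R^G; consequently tr_{R^G}(R^{(1,0)}) strictly contains R^{(1,0)} · R^{(3,0)} (where R^{(3,0)} is the semi-invariants of the inverse character of that of R^{(1,0)}). -/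
open MvPolynomial

set_option synthInstance.maxHeartbeats 1000000
set_option maxHeartbeats 1000000

noncomputable section

variable {K : Type} [Field K] {d : ℕ}

lemma mem_Ggen {ℓ : ℕ} (σ : Fin ℓ → (MvPolynomial (Fin d) K ≃ₐ[K] MvPolynomial (Fin d) K))
    (i : Fin ℓ) : σ i ∈ Ggen σ :=
  Subgroup.subset_closure (Set.mem_range_self i)

/-- The semi-invariants of the character determined on the generators `σ_i` by the
values `c i ∈ K`, as an `R^G`-submodule of `R`. -/
def semiInvariantsOn {ℓ : ℕ}
    (σ : Fin ℓ → (MvPolynomial (Fin d) K ≃ₐ[K] MvPolynomial (Fin d) K))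
    (c : Fin ℓ → K) : Submodule (invariants (Ggen σ)) (MvPolynomial (Fin d) K) where
  carrier := {a | ∀ i, σ i a = c i • a}
  add_mem' := fun ha hb i => by rw [map_add, ha i, hb i, smul_add]
  zero_mem' := fun i => by rw [map_zero, smul_zero]
  smul_mem' := fun s a ha i => by
    have h1 : (s • a : MvPolynomial (Fin d) K) = (s : MvPolynomial (Fin d) K) * a := rfl
    rw [h1, map_mul, s.2 (σ i) (mem_Ggen σ i), ha i, mul_smul_comm]

section AuxLemmas

lemma aux_apply_monomial (g : MvPolynomial (Fin d) K ≃ₐ[K] MvPolynomial (Fin d) K)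
    (c : Fin d → K) (hg : ∀ j, g (X j) = c j • X j) (e : Fin d →₀ ℕ) (k : K) :
    g (monomial e k) = (∏ j, c j ^ e j) • monomial e k := by
  have hsupp : (∏ j, c j ^ e j) = ∏ j ∈ e.support, c j ^ e j := by
    refine (Finset.prod_subset (Finset.subset_univ _) ?_).symm
    intro x _ hx
    rw [Finsupp.notMem_support_iff.mp hx, pow_zero]
  rw [monomial_eq, map_mul, ← algebraMap_eq, AlgEquiv.commutes, Finsupp.prod, map_prod]
  have : ∀ j ∈ e.support, g (X j ^ e j) = C (c j ^ e j) * X j ^ e j := by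
    intro j _
    rw [map_pow, hg j, smul_pow, smul_eq_C_mul]
  rw [Finset.prod_congr rfl this, Finset.prod_mul_distrib, ← map_prod, smul_eq_C_mul, hsupp]
  ring

lemma aux_coeff_apply (g : MvPolynomial (Fin d) K ≃ₐ[K] MvPolynomial (Fin d) K)
    (c : Fin d → K) (hg : ∀ j, g (X j) = c j • X j) (p : MvPolynomial (Fin d) K)
    (e : Fin d →₀ ℕ) :
    coeff e (g p) = (∏ j, c j ^ e j) * coeff e p := by
  conv_lhs => rw [p.as_sum, map_sum]
  rw [coeff_sum]
  have : ∀ e' ∈ p.support, coeff e (g (monomial e' (coeff e' p)))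
      = if e' = e then (∏ j, c j ^ e' j) * coeff e' p else 0 := by
    intro e' _
    rw [aux_apply_monomial g c hg, coeff_smul, coeff_monomial, smul_eq_mul, mul_ite, mul_zero]
  rw [Finset.sum_congr rfl this, Finset.sum_ite_eq' p.support e
    (fun e' => (∏ j, c j ^ e' j) * coeff e' p)]
  by_cases he : e ∈ p.support
  · rw [if_pos he]
  · rw [if_neg he, notMem_support_iff.mp he, mul_zero]

lemma aux_pow_mod {M : Type*} [Monoid M] {ζ : M} {n : ℕ} (h : ζ ^ n = 1) (a : ℕ) :
    ζ ^ a = ζ ^ (a % n) := by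
  conv_lhs => rw [← Nat.div_add_mod a n]
  rw [pow_add, pow_mul, h, one_pow, one_mul]

/-- reduce invariance to generators -/
lemma aux_mem_invariants {ℓ : ℕ}
    (σ : Fin ℓ → (MvPolynomial (Fin d) K ≃ₐ[K] MvPolynomial (Fin d) K))
    (p : MvPolynomial (Fin d) K) (h : ∀ i, σ i p = p) :
    ∀ g ∈ Subgroup.closure (Set.range σ), g p = p := by
  intro g hg
  induction hg using Subgroup.closure_induction with
  | mem x hx => obtain ⟨i, rfl⟩ := hx; exact h i
  | one => exact AlgEquiv.one_apply p
  | mul x y hx hy px py => rw [AlgEquiv.mul_apply, py, px]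
  | inv x hx px =>
      apply x.injective
      rw [px]
      have : x (x⁻¹ p) = (x * x⁻¹) p := (AlgEquiv.mul_apply x x⁻¹ p).symm
      rw [this, mul_inv_cancel, AlgEquiv.one_apply]

lemma aux_algEquiv_eq_one (g : MvPolynomial (Fin d) K ≃ₐ[K] MvPolynomial (Fin d) K)
    (h : ∀ j, g (X j) = X j) : g = 1 := by
  have h' : (g : MvPolynomial (Fin d) K →ₐ[K] MvPolynomial (Fin d) K)
      = AlgHom.id K _ := MvPolynomial.algHom_ext (by simpa using h)
  refine AlgEquiv.ext fun p => ?_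
  simpa using AlgHom.congr_fun h' p

section SpecificSetup
variable {K : Type} [Field K]
variable (ξ₁ ξ₂ : K)
variable (σ : Fin 2 → (MvPolynomial (Fin 3) K ≃ₐ[K] MvPolynomial (Fin 3) K))

lemma aux_coeff_sigma0 (hσ₁ : ∀ j, σ 0 (X j) = ξ₁ • X j)
    (p : MvPolynomial (Fin 3) K) (e : Fin 3 →₀ ℕ) :
    coeff e (σ 0 p) = ξ₁ ^ (e 0 + e 1 + e 2) * coeff e p := by
  rw [aux_coeff_apply (σ 0) (fun _ => ξ₁) hσ₁ p e, Fin.prod_univ_three, ← pow_add, ← pow_add]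

lemma aux_coeff_sigma1 (hσ₂ : ∀ j, σ 1 (X j) = ![ξ₂, ξ₂ ^ 2, ξ₂ ^ 3] j • X j)
    (p : MvPolynomial (Fin 3) K) (e : Fin 3 →₀ ℕ) :
    coeff e (σ 1 p) = ξ₂ ^ (e 0 + 2 * e 1 + 3 * e 2) * coeff e p := by
  rw [aux_coeff_apply (σ 1) ![ξ₂, ξ₂ ^ 2, ξ₂ ^ 3] hσ₂ p e, Fin.prod_univ_three]
  simp only [Matrix.cons_val_zero, Matrix.cons_val_one, Matrix.head_cons,
    Matrix.cons_val_two, Matrix.tail_cons]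
  rw [← pow_mul, ← pow_mul, ← pow_add, ← pow_add]

lemma aux_X1_dvd (hξ₁ : IsPrimitiveRoot ξ₁ 4) (hξ₂ : IsPrimitiveRoot ξ₂ 6)
    (hσ₁ : ∀ j, σ 0 (X j) = ξ₁ • X j)
    (hσ₂ : ∀ j, σ 1 (X j) = ![ξ₂, ξ₂ ^ 2, ξ₂ ^ 3] j • X j)
    (s : ℕ) (hs : s % 2 = 1) (f : MvPolynomial (Fin 3) K)
    (h0 : σ 0 f = ξ₁ ^ s • f) (h1 : σ 1 f = f) : X 1 ∣ f := by
  have key : ∀ e : Fin 3 →₀ ℕ, e 1 = 0 → coeff e f = 0 := by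
    intro e he1
    by_contra hne
    have c0 : ξ₁ ^ (e 0 + e 1 + e 2) * coeff e f = ξ₁ ^ s * coeff e f := by
      rw [← aux_coeff_sigma0 ξ₁ σ hσ₁ f e, h0, coeff_smul, smul_eq_mul]
    have c1 : ξ₂ ^ (e 0 + 2 * e 1 + 3 * e 2) * coeff e f = 1 * coeff e f := by
      rw [← aux_coeff_sigma1 ξ₂ σ hσ₂ f e, h1, one_mul]
    have e0 : ξ₁ ^ (e 0 + e 1 + e 2) = ξ₁ ^ s := mul_right_cancel₀ hne c0
    have e1 : ξ₂ ^ (e 0 + 2 * e 1 + 3 * e 2) = 1 := mul_right_cancel₀ hne c1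
    -- convert to congruences
    rw [aux_pow_mod hξ₁.pow_eq_one, aux_pow_mod hξ₁.pow_eq_one s] at e0
    have m4 : (e 0 + e 1 + e 2) % 4 = s % 4 :=
      hξ₁.pow_inj (Nat.mod_lt _ (by norm_num)) (Nat.mod_lt _ (by norm_num)) e0
    have m6 : (6 : ℕ) ∣ (e 0 + 2 * e 1 + 3 * e 2) := (hξ₂.pow_eq_one_iff_dvd _).mp e1
    omega
  rw [X_dvd_iff_modMonomial_eq_zero]
  ext e
  rcases Nat.eq_zero_or_pos (e 1) with he | he
  · rw [coeff_modMonomial_of_not_le, key e he, coeff_zero]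
    intro hle
    rw [Finsupp.le_def] at hle
    have := hle 1
    simp [Finsupp.single_apply, he] at this
  · rw [coeff_modMonomial_of_le, coeff_zero]
    rw [Finsupp.le_def]
    intro j
    rcases eq_or_ne j 1 with rfl | hj
    · simp [Finsupp.single_apply]; omega
    · simp [Finsupp.single_apply, Ne.symm hj]

end SpecificSetup

lemma aux_diag_pow_apply (g : MvPolynomial (Fin d) K ≃ₐ[K] MvPolynomial (Fin d) K)
    (c : Fin d → K) (hg : ∀ j, g (X j) = c j • X j) (n : ℕ) (j : Fin d) :
    (g ^ n) (X j) = c j ^ n • X j := by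
  induction n with
  | zero => simp [AlgEquiv.one_apply]
  | succ n ih =>
      rw [pow_succ, AlgEquiv.mul_apply, hg j, map_smul, ih, smul_smul, ← pow_succ']

lemma aux_pow_eq_one (g : MvPolynomial (Fin d) K ≃ₐ[K] MvPolynomial (Fin d) K)
    (c : Fin d → K) (hg : ∀ j, g (X j) = c j • X j) (n : ℕ) (hc : ∀ j, c j ^ n = 1) :
    g ^ n = 1 :=
  aux_algEquiv_eq_one _ fun j => by rw [aux_diag_pow_apply g c hg n j, hc j, one_smul]

lemma aux_diag_prod (g : MvPolynomial (Fin 3) K ≃ₐ[K] MvPolynomial (Fin 3) K)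
    (c : Fin 3 → K) (hg : ∀ j, g (X j) = c j • X j) (a b c' : ℕ) :
    g (X 0 ^ a * X 1 ^ b * X 2 ^ c')
      = (c 0 ^ a * c 1 ^ b * c 2 ^ c') • (X 0 ^ a * X 1 ^ b * X 2 ^ c') := by
  rw [map_mul, map_mul, map_pow, map_pow, map_pow, hg 0, hg 1, hg 2, smul_pow, smul_pow,
    smul_pow, smul_mul_smul_comm, smul_mul_smul_comm]

lemma aux_mem_inv {ℓ : ℕ}
    (σ : Fin ℓ → (MvPolynomial (Fin d) K ≃ₐ[K] MvPolynomial (Fin d) K))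
    (p : MvPolynomial (Fin d) K) (h : ∀ i, σ i p = p) : p ∈ invariants (Ggen σ) :=
  aux_mem_invariants σ p h

lemma aux_prod_le_trace (G : Subgroup (MvPolynomial (Fin d) K ≃ₐ[K] MvPolynomial (Fin d) K))
    (N₁ N₂ : Submodule (invariants G) (MvPolynomial (Fin d) K))
    (hmul : ∀ h ∈ N₂, ∀ u ∈ N₁, u * h ∈ invariants G) :
    prodIdeal G N₁ N₂ ≤ traceIdeal (invariants G) N₁ := by
  refine Ideal.span_le.mpr ?_
  rintro a ⟨f, hf, h, hh, heq⟩
  let F : N₁ →ₗ[invariants G] invariants G :=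
    { toFun := fun u => ⟨u.1 * h, hmul h hh u.1 u.2⟩
      map_add' := fun u v => Subtype.ext (by
        show ((u.1 + v.1) * h : MvPolynomial (Fin d) K) = u.1 * h + v.1 * h
        ring)
      map_smul' := fun s u => Subtype.ext (by
        show ((s.1 * u.1) * h : MvPolynomial (Fin d) K) = s.1 * (u.1 * h)
        ring) }
  have hmem : a ∈ LinearMap.range F := ⟨⟨f, hf⟩, Subtype.ext (by simp [F, heq])⟩
  exact le_iSup (fun f : N₁ →ₗ[invariants G] invariants G => LinearMap.range f) F hmem

section DivMap
variable {K : Type} [Field K]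
variable (ξ₁ ξ₂ : K)
variable (σ : Fin 2 → (MvPolynomial (Fin 3) K ≃ₐ[K] MvPolynomial (Fin 3) K))
variable (hξ₁ : IsPrimitiveRoot ξ₁ 4) (hξ₂ : IsPrimitiveRoot ξ₂ 6)
variable (hσ₁ : ∀ j, σ 0 (X j) = ξ₁ • X j)
variable (hσ₂ : ∀ j, σ 1 (X j) = ![ξ₂, ξ₂ ^ 2, ξ₂ ^ 3] j • X j)
set_option linter.unusedSectionVars false
include hξ₁ hξ₂ hσ₁ hσ₂

lemma aux_exact (u : MvPolynomial (Fin 3) K) (hu : u ∈ semiInvariantsOn σ ![ξ₁, 1]) :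
    X 1 * u.divMonomial (Finsupp.single 1 1) = u := by
  have h0 : σ 0 u = ξ₁ ^ 1 • u := by have := hu 0; simpa using this
  have h1 : σ 1 u = u := by have := hu 1; simpa using this
  obtain ⟨q, rfl⟩ := aux_X1_dvd ξ₁ ξ₂ σ hξ₁ hξ₂ hσ₁ hσ₂ 1 rfl u h0 h1
  rw [X_mul_divMonomial]

lemma aux_q_weights (u q : MvPolynomial (Fin 3) K) (hu : u ∈ semiInvariantsOn σ ![ξ₁, 1])
    (hq : X 1 * q = u) : σ 0 q = q ∧ ξ₂ ^ 2 • σ 1 q = q := by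
  have hξ₁0 : ξ₁ ≠ 0 := by
    intro h; have h4 := hξ₁.pow_eq_one; rw [h] at h4; norm_num at h4
  have hX1 : (X 1 : MvPolynomial (Fin 3) K) ≠ 0 := X_ne_zero 1
  constructor
  · have h0 : σ 0 u = ξ₁ • u := by have := hu 0; simpa using this
    have key : ξ₁ • (X 1 * σ 0 q) = ξ₁ • (X 1 * q) := by
      calc ξ₁ • (X 1 * σ 0 q) = (ξ₁ • X 1) * σ 0 q := (smul_mul_assoc _ _ _).symm
        _ = σ 0 (X 1) * σ 0 q := by rw [hσ₁ 1]
        _ = σ 0 (X 1 * q) := (map_mul _ _ _).symm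
        _ = ξ₁ • (X 1 * q) := by rw [hq, h0]
    exact mul_left_cancel₀ hX1 (smul_right_injective _ hξ₁0 key)
  · have h1 : σ 1 u = u := by have := hu 1; simpa using this
    have key : X 1 * (ξ₂ ^ 2 • σ 1 q) = X 1 * q := by
      calc X 1 * (ξ₂ ^ 2 • σ 1 q) = (ξ₂ ^ 2 • X 1) * σ 1 q := by
            rw [mul_smul_comm, smul_mul_assoc]
        _ = σ 1 (X 1) * σ 1 q := by
            rw [hσ₂ 1]; norm_num
        _ = σ 1 (X 1 * q) := (map_mul _ _ _).symm
        _ = X 1 * q := by rw [hq, h1]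
    exact mul_left_cancel₀ hX1 key

lemma aux_image_mem (q : MvPolynomial (Fin 3) K) (h0 : σ 0 q = q) (h1 : ξ₂ ^ 2 • σ 1 q = q) :
    X 0 ^ 11 * X 2 ^ 21 * q ∈ invariants (Ggen σ) := by
  apply aux_mem_inv
  intro i; fin_cases i
  · show σ 0 _ = _
    rw [map_mul, map_mul, map_pow, map_pow, hσ₁ 0, hσ₁ 2, h0, smul_pow, smul_pow,
      smul_mul_smul_comm, smul_mul_assoc, ← pow_add,
      show (11 + 21 : ℕ) = 4 * 8 from rfl, pow_mul, hξ₁.pow_eq_one, one_pow, one_smul]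
  · show σ 1 _ = _
    rw [map_mul, map_mul, map_pow, map_pow, hσ₂ 0, hσ₂ 2]
    simp only [Matrix.cons_val_zero, Matrix.cons_val_two, Matrix.tail_cons, Matrix.head_cons]
    rw [smul_pow, smul_pow, smul_mul_smul_comm, smul_mul_assoc, ← pow_mul, ← pow_add,
      show (11 + 3 * 21 : ℕ) = 72 + 2 from rfl, pow_add, mul_smul, ← mul_smul_comm, h1,
      show (72 : ℕ) = 6 * 12 from rfl, pow_mul, hξ₂.pow_eq_one, one_pow, one_smul]

def auxDivMap : semiInvariantsOn σ ![ξ₁, 1] →ₗ[invariants (Ggen σ)] invariants (Ggen σ) where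
  toFun u := ⟨X 0 ^ 11 * X 2 ^ 21 * (u.1.divMonomial (Finsupp.single 1 1)), by
    have hq := aux_exact ξ₁ ξ₂ σ hξ₁ hξ₂ hσ₁ hσ₂ u.1 u.2
    have hw := aux_q_weights ξ₁ ξ₂ σ hξ₁ hξ₂ hσ₁ hσ₂ u.1 _ u.2 hq
    exact aux_image_mem ξ₁ ξ₂ σ hξ₁ hξ₂ hσ₁ hσ₂ _ hw.1 hw.2⟩
  map_add' u v := Subtype.ext (by
    show X 0 ^ 11 * X 2 ^ 21 * ((u.1 + v.1).divMonomial (Finsupp.single 1 1))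
        = X 0 ^ 11 * X 2 ^ 21 * (u.1.divMonomial (Finsupp.single 1 1))
          + X 0 ^ 11 * X 2 ^ 21 * (v.1.divMonomial (Finsupp.single 1 1))
    rw [add_divMonomial]; ring)
  map_smul' s u := Subtype.ext (by
    have hq := aux_exact ξ₁ ξ₂ σ hξ₁ hξ₂ hσ₁ hσ₂ u.1 u.2
    show X 0 ^ 11 * X 2 ^ 21 * ((s.1 * u.1).divMonomial (Finsupp.single 1 1))
        = s.1 * (X 0 ^ 11 * X 2 ^ 21 * (u.1.divMonomial (Finsupp.single 1 1)))
    conv_lhs => rw [← hq]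
    rw [show s.1 * (X 1 * u.1.divMonomial (Finsupp.single 1 1))
        = X 1 * (s.1 * u.1.divMonomial (Finsupp.single 1 1)) from by ring, X_mul_divMonomial]
    ring)

end DivMap

end AuxLemmas

/-- Example 3.10: for `d = 3`, `G = ⟨σ₁, σ₂⟩` with `σ₁ = diag(ξ₁, ξ₁, ξ₁)`
(`ξ₁` a primitive 4th root of unity) and `σ₂ = diag(ξ₂, ξ₂², ξ₂³)` (`ξ₂` a primitive
6th root of unity): (i) every semi-invariant module `R^𝒳` is nonzero, and
(ii) `X₁¹² X₃²⁴` lies in `tr_{R^G}(R^{(1,0)})` but not in `R^{(1,0)} · R^{(3,0)}`;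
consequently `tr_{R^G}(R^{(1,0)}) ⊋ R^{(1,0)} · R^{(3,0)}`. -/
theorem statement18 [IsAlgClosed K]
    (h2 : (2 : K) ≠ 0) (h3 : (3 : K) ≠ 0)
    (ξ₁ ξ₂ : K) (hξ₁ : IsPrimitiveRoot ξ₁ 4) (hξ₂ : IsPrimitiveRoot ξ₂ 6)
    (σ : Fin 2 → (MvPolynomial (Fin 3) K ≃ₐ[K] MvPolynomial (Fin 3) K))
    (hσ₁ : ∀ j, σ 0 (X j) = ξ₁ • X j)
    (hσ₂0 : σ 1 (X 0) = ξ₂ • X 0)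
    (hσ₂1 : σ 1 (X 1) = ξ₂ ^ 2 • X 1)
    (hσ₂2 : σ 1 (X 2) = ξ₂ ^ 3 • X 2) :
    (∀ χ : Ggen σ →* Kˣ, semiInvariants (Ggen σ) χ ≠ ⊥) ∧
    (∃ a : invariants (Ggen σ),
      (a : MvPolynomial (Fin 3) K) = X 0 ^ 12 * X 2 ^ 24 ∧
      a ∈ traceIdeal (invariants (Ggen σ)) (semiInvariantsOn σ ![ξ₁, 1]) ∧
      a ∉ prodIdeal (Ggen σ) (semiInvariantsOn σ ![ξ₁, 1])
        (semiInvariantsOn σ ![ξ₁ ^ 3, 1])) ∧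
    prodIdeal (Ggen σ) (semiInvariantsOn σ ![ξ₁, 1]) (semiInvariantsOn σ ![ξ₁ ^ 3, 1]) <
      traceIdeal (invariants (Ggen σ)) (semiInvariantsOn σ ![ξ₁, 1]) := by
  classical
  have hσ₂ : ∀ j, σ 1 (X j) = ![ξ₂, ξ₂ ^ 2, ξ₂ ^ 3] j • X j := by
    intro j
    fin_cases j
    · simpa using hσ₂0
    · simpa using hσ₂1
    · simpa using hσ₂2
  have hξ14 : ξ₁ ^ 4 = 1 := hξ₁.pow_eq_one
  have hξ26 : ξ₂ ^ 6 = 1 := hξ₂.pow_eq_one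
  have hprod0 : ∀ a b c : ℕ, σ 0 (X 0 ^ a * X 1 ^ b * X 2 ^ c)
      = ξ₁ ^ (a + b + c) • (X 0 ^ a * X 1 ^ b * X 2 ^ c) := by
    intro a b c
    rw [aux_diag_prod (σ 0) (fun _ => ξ₁) hσ₁ a b c, ← pow_add, ← pow_add]
  have hprod1 : ∀ a b c : ℕ, σ 1 (X 0 ^ a * X 1 ^ b * X 2 ^ c)
      = ξ₂ ^ (a + 2 * b + 3 * c) • (X 0 ^ a * X 1 ^ b * X 2 ^ c) := by
    intro a b c
    rw [aux_diag_prod (σ 1) ![ξ₂, ξ₂ ^ 2, ξ₂ ^ 3] hσ₂ a b c]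
    simp only [Matrix.cons_val_zero, Matrix.cons_val_one, Matrix.head_cons,
      Matrix.cons_val_two, Matrix.tail_cons]
    rw [← pow_mul, ← pow_mul, ← pow_add, ← pow_add]
  -- invariance of the distinguished monomial
  have hw : (X 0 ^ 12 * X 2 ^ 24 : MvPolynomial (Fin 3) K) ∈ invariants (Ggen σ) := by
    have e : (X 0 ^ 12 * X 2 ^ 24 : MvPolynomial (Fin 3) K)
        = X 0 ^ 12 * X 1 ^ 0 * X 2 ^ 24 := by ring
    rw [e]
    apply aux_mem_inv
    intro i; fin_cases i
    · show σ 0 _ = _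
      rw [hprod0, show (12 + 0 + 24 : ℕ) = 4 * 9 from rfl, pow_mul, hξ14, one_pow, one_smul]
    · show σ 1 _ = _
      rw [hprod1, show (12 + 2 * 0 + 3 * 24 : ℕ) = 6 * 14 from rfl, pow_mul, hξ26,
        one_pow, one_smul]
  -- membership criteria for the two semi-invariant modules
  have memN : ∀ f : MvPolynomial (Fin 3) K, σ 0 f = ξ₁ • f → σ 1 f = f →
      f ∈ semiInvariantsOn σ ![ξ₁, 1] := by
    intro f h0 h1
    show ∀ i, σ i f = ![ξ₁, (1 : K)] i • f
    intro i; fin_cases i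
    · simpa using h0
    · simpa using h1
  have hdvdN : ∀ f ∈ semiInvariantsOn σ ![ξ₁, 1], X 1 ∣ f := by
    intro f hf
    exact aux_X1_dvd ξ₁ ξ₂ σ hξ₁ hξ₂ hσ₁ hσ₂ 1 rfl f (by simpa using hf 0) (by simpa using hf 1)
  have hdvdN' : ∀ f ∈ semiInvariantsOn σ ![ξ₁ ^ 3, 1], X 1 ∣ f := by
    intro f hf
    exact aux_X1_dvd ξ₁ ξ₂ σ hξ₁ hξ₂ hσ₁ hσ₂ 3 rfl f (by simpa using hf 0) (by simpa using hf 1)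
  -- the element X0 X1 X2^3 of R^{(1,0)}
  have hu₀ : (X 0 ^ 1 * X 1 ^ 1 * X 2 ^ 3 : MvPolynomial (Fin 3) K)
      ∈ semiInvariantsOn σ ![ξ₁, 1] := by
    apply memN
    · rw [hprod0, show (1 + 1 + 3 : ℕ) = 1 + 4 * 1 from rfl, pow_add, pow_mul, hξ14,
        one_pow, mul_one, pow_one]
    · rw [hprod1, show (1 + 2 * 1 + 3 * 3 : ℕ) = 6 * 2 from rfl, pow_mul, hξ26,
        one_pow, one_smul]
  -- trace membership
  have htrace : (⟨X 0 ^ 12 * X 2 ^ 24, hw⟩ : invariants (Ggen σ))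
      ∈ traceIdeal (invariants (Ggen σ)) (semiInvariantsOn σ ![ξ₁, 1]) := by
    have hmem : (⟨X 0 ^ 12 * X 2 ^ 24, hw⟩ : invariants (Ggen σ))
        ∈ LinearMap.range (auxDivMap ξ₁ ξ₂ σ hξ₁ hξ₂ hσ₁ hσ₂) := by
      refine ⟨⟨X 0 ^ 1 * X 1 ^ 1 * X 2 ^ 3, hu₀⟩, Subtype.ext ?_⟩
      show X 0 ^ 11 * X 2 ^ 21 *
          ((X 0 ^ 1 * X 1 ^ 1 * X 2 ^ 3 : MvPolynomial (Fin 3) K).divMonomial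
            (Finsupp.single 1 1)) = X 0 ^ 12 * X 2 ^ 24
      rw [show (X 0 ^ 1 * X 1 ^ 1 * X 2 ^ 3 : MvPolynomial (Fin 3) K)
          = X 1 * (X 0 ^ 1 * X 2 ^ 3) from by ring, X_mul_divMonomial]
      ring
    exact le_iSup
      (fun f : _ →ₗ[invariants (Ggen σ)] invariants (Ggen σ) => LinearMap.range f) _ hmem
  -- non-membership in the product ideal
  have hnot : (⟨X 0 ^ 12 * X 2 ^ 24, hw⟩ : invariants (Ggen σ)) ∉
      prodIdeal (Ggen σ) (semiInvariantsOn σ ![ξ₁, 1]) (semiInvariantsOn σ ![ξ₁ ^ 3, 1]) := by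
    intro hmem
    let J : Ideal (invariants (Ggen σ)) :=
      { carrier := {a : invariants (Ggen σ) |
          (X 1 : MvPolynomial (Fin 3) K) ^ 2 ∣ (a : MvPolynomial (Fin 3) K)}
        add_mem' := fun ha hb => dvd_add ha hb
        zero_mem' := dvd_zero _
        smul_mem' := fun c x hx => Dvd.dvd.mul_left hx (c : MvPolynomial (Fin 3) K) }
    have hle : prodIdeal (Ggen σ) (semiInvariantsOn σ ![ξ₁, 1])
        (semiInvariantsOn σ ![ξ₁ ^ 3, 1]) ≤ J := by
      refine Ideal.span_le.mpr ?_
      rintro a ⟨f, hf, h, hh, heq⟩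
      show (X 1 : MvPolynomial (Fin 3) K) ^ 2 ∣ (a : MvPolynomial (Fin 3) K)
      rw [heq, pow_two]
      exact mul_dvd_mul (hdvdN f hf) (hdvdN' h hh)
    have hdvd2 : (X 1 : MvPolynomial (Fin 3) K) ^ 2 ∣ X 0 ^ 12 * X 2 ^ 24 := hle hmem
    obtain ⟨g, hg⟩ := hdvd2
    have hcontr := congrArg (aeval ![X 0, (0 : MvPolynomial (Fin 3) K), X 2]) hg
    simp only [map_mul, map_pow, aeval_X, Matrix.cons_val_zero, Matrix.cons_val_one,
      Matrix.head_cons, Matrix.cons_val_two, Matrix.tail_cons, ne_eq, OfNat.ofNat_ne_zero,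
      not_false_eq_true, zero_pow, zero_mul] at hcontr
    exact (mul_ne_zero (pow_ne_zero _ (X_ne_zero _)) (pow_ne_zero _ (X_ne_zero _))) hcontr
  -- product ideal is contained in the trace ideal
  have hle2 : prodIdeal (Ggen σ) (semiInvariantsOn σ ![ξ₁, 1])
      (semiInvariantsOn σ ![ξ₁ ^ 3, 1]) ≤
      traceIdeal (invariants (Ggen σ)) (semiInvariantsOn σ ![ξ₁, 1]) := by
    apply aux_prod_le_trace
    intro h hh u hu
    apply aux_mem_inv
    intro i; fin_cases i
    · show σ 0 _ = _
      have h0u : σ 0 u = ξ₁ • u := by simpa using hu 0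
      have h0h : σ 0 h = ξ₁ ^ 3 • h := by simpa using hh 0
      have hsc : ξ₁ * ξ₁ ^ 3 = 1 := by
        have : ξ₁ * ξ₁ ^ 3 = ξ₁ ^ 4 := by ring
        rw [this, hξ14]
      rw [map_mul, h0u, h0h, smul_mul_smul_comm, hsc, one_smul]
    · show σ 1 _ = _
      have h1u : σ 1 u = u := by simpa using hu 1
      have h1h : σ 1 h = h := by simpa using hh 1
      rw [map_mul, h1u, h1h]
  -- Part (i)
  have part1 : ∀ χ : Ggen σ →* Kˣ, semiInvariants (Ggen σ) χ ≠ ⊥ := by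
    intro χ
    have hσ04 : σ 0 ^ 4 = 1 := aux_pow_eq_one (σ 0) (fun _ => ξ₁) hσ₁ 4 (fun _ => hξ14)
    have hσ16 : σ 1 ^ 6 = 1 := by
      refine aux_pow_eq_one (σ 1) ![ξ₂, ξ₂ ^ 2, ξ₂ ^ 3] hσ₂ 6 ?_
      intro j
      fin_cases j
      · simpa using hξ26
      · show (ξ₂ ^ 2) ^ 6 = 1
        rw [← pow_mul, show (2 * 6 : ℕ) = 6 * 2 from rfl, pow_mul, hξ26, one_pow]
      · show (ξ₂ ^ 3) ^ 6 = 1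
        rw [← pow_mul, show (3 * 6 : ℕ) = 6 * 3 from rfl, pow_mul, hξ26, one_pow]
    have hval0 : ((χ ⟨σ 0, mem_Ggen σ 0⟩ : Kˣ) : K) ^ 4 = 1 := by
      have hpow : (⟨σ 0, mem_Ggen σ 0⟩ : Ggen σ) ^ 4 = 1 := by
        apply Subtype.ext
        rw [SubmonoidClass.coe_pow, OneMemClass.coe_one]
        exact hσ04
      rw [← Units.val_pow_eq_pow_val, ← map_pow, hpow, map_one, Units.val_one]
    obtain ⟨s, hs4, hχ0⟩ := hξ₁.eq_pow_of_pow_eq_one hval0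
    have hval1 : ((χ ⟨σ 1, mem_Ggen σ 1⟩ : Kˣ) : K) ^ 6 = 1 := by
      have hpow : (⟨σ 1, mem_Ggen σ 1⟩ : Ggen σ) ^ 6 = 1 := by
        apply Subtype.ext
        rw [SubmonoidClass.coe_pow, OneMemClass.coe_one]
        exact hσ16
      rw [← Units.val_pow_eq_pow_val, ← map_pow, hpow, map_one, Units.val_one]
    obtain ⟨t, ht6, hχ1⟩ := hξ₂.eq_pow_of_pow_eq_one hval1
    have hm0 : (X 0 ^ (4 * s + 11 * t) * X 1 ^ (s + t) * X 2 ^ 0 :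
        MvPolynomial (Fin 3) K) ≠ 0 := by
      refine mul_ne_zero (mul_ne_zero ?_ ?_) ?_ <;> exact pow_ne_zero _ (X_ne_zero _)
    have hmm : (X 0 ^ (4 * s + 11 * t) * X 1 ^ (s + t) * X 2 ^ 0 : MvPolynomial (Fin 3) K)
        ∈ semiInvariants (Ggen σ) χ := by
      show ∀ g : Ggen σ, (g : MvPolynomial (Fin 3) K ≃ₐ[K] MvPolynomial (Fin 3) K)
          (X 0 ^ (4 * s + 11 * t) * X 1 ^ (s + t) * X 2 ^ 0)
          = ((χ g : Kˣ) : K) • (X 0 ^ (4 * s + 11 * t) * X 1 ^ (s + t) * X 2 ^ 0)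
      rintro ⟨g, hg⟩
      induction hg using Subgroup.closure_induction with
      | mem x hx =>
          obtain ⟨i, rfl⟩ := hx
          fin_cases i
          · show σ 0 _ = ((χ ⟨σ 0, mem_Ggen σ 0⟩ : Kˣ) : K) • _
            rw [hprod0, ← hχ0,
              show 4 * s + 11 * t + (s + t) + 0 = s + 4 * (s + 3 * t) from by ring,
              pow_add, pow_mul, hξ14, one_pow, mul_one]
          · show σ 1 _ = ((χ ⟨σ 1, mem_Ggen σ 1⟩ : Kˣ) : K) • _
            rw [hprod1, ← hχ1,
              show 4 * s + 11 * t + 2 * (s + t) + 3 * 0 = t + 6 * (s + 2 * t) from by ring,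
              pow_add, pow_mul, hξ26, one_pow, mul_one]
      | one =>
          show (1 : MvPolynomial (Fin 3) K ≃ₐ[K] MvPolynomial (Fin 3) K) _
            = ((χ 1 : Kˣ) : K) • _
          rw [map_one, Units.val_one, one_smul, AlgEquiv.one_apply]
      | mul x y hx hy px py =>
          show (x * y) _ = ((χ (⟨x, hx⟩ * ⟨y, hy⟩) : Kˣ) : K) • _
          rw [AlgEquiv.mul_apply, py, map_smul, px, smul_smul, map_mul, Units.val_mul, mul_comm]
      | inv x hx px =>
          show x⁻¹ _ = ((χ ((⟨x, hx⟩ : Ggen σ)⁻¹) : Kˣ) : K) • _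
          apply x.injective
          rw [map_smul, px]
          have hxx : x (x⁻¹ (X 0 ^ (4 * s + 11 * t) * X 1 ^ (s + t) * X 2 ^ 0))
              = X 0 ^ (4 * s + 11 * t) * X 1 ^ (s + t) * X 2 ^ 0 := by
            rw [← AlgEquiv.mul_apply, mul_inv_cancel, AlgEquiv.one_apply]
          rw [hxx, smul_smul, map_inv, ← Units.val_mul, inv_mul_cancel, Units.val_one, one_smul]
    intro hbot
    rw [hbot] at hmm
    exact hm0 ((Submodule.mem_bot _).mp hmm)
  exact ⟨part1, ⟨⟨X 0 ^ 12 * X 2 ^ 24, hw⟩, rfl, htrace, hnot⟩,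
    lt_of_le_of_ne hle2 (fun he => hnot (by rw [he]; exact htrace))⟩


end
end
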